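/- arXiv:1108.3769 — 5 statements merged into one kernel-verified Lean document; each statement's English description precedes it below -/
import Mathlib

section
/- Let E be a finite-dimensional real inner product space, R a root system in E with set of positive roots R⁺, and κ : R → ℂ a multiplicity function. For every smooth (C^∞) function f : E → ℂ, all ξ, η ∈ E, and every x ∈ P = E ∖ ⋃_{α∈R} H_α, the Dunkl operators commute: T_{ξ,κ}(T_{η,κ} f)(x) = T_{η,κ}(T_{ξ,κ} f)(x), where T_{η,κ} f is regarded as a smooth function on the G-invariant open set P and T_{ξ,κ} is applied to it by the same formula (this makes sense since σ_α maps P to P for every α ∈ R). -/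
noncomputable section

variable {E : Type*} [NormedAddCommGroup E] [InnerProductSpace ℝ E]

/-- The orthogonal reflection `σ_α` in the hyperplane `H_α` orthogonal to `α`. -/
def reflect (α x : E) : E := x - ((2 * (inner ℝ α x : ℝ)) / ‖α‖ ^ 2) • α

/-- `R` is a root system in `E`. -/
structure IsRootSystem (R : Finset E) : Prop where
  nonzero : ∀ α ∈ R, α ≠ 0
  neg_mem : ∀ α ∈ R, -α ∈ R
  smul_mem : ∀ α ∈ R, ∀ r : ℝ, r • α ∈ R → r = 1 ∨ r = -1
  reflect_eq : ∀ α ∈ R, reflect α '' (R : Set E) = (R : Set E)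
  norm_sq : ∀ α ∈ R, ‖α‖ ^ 2 = 2

/-- The Coxeter group `G = G(R)`. -/
def coxeterGroup (R : Finset E) : Subgroup (E ≃ₗᵢ[ℝ] E) :=
  Subgroup.closure {g | ∃ α ∈ R, ⇑g = reflect α}

/-- `Rp` is a set of positive roots for `R`. -/
def IsPositiveSystem (R Rp : Finset E) : Prop :=
  (∀ α : E, α ∈ R ↔ (α ∈ Rp ∨ -α ∈ Rp)) ∧ ∀ α ∈ Rp, -α ∉ Rp

/-- The Dunkl operator `T_{ξ,κ}`. -/
def dunkl (Rp : Finset E) (κ : E → ℂ) (ξ : E) (f : E → ℂ) (x : E) : ℂ :=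
  fderiv ℝ f x ξ +
    ∑ α ∈ Rp, κ α * (((inner ℝ α ξ : ℝ) / (inner ℝ α x : ℝ) : ℝ) : ℂ) * (f x - f (reflect α x))


open RealInnerProductSpace

variable {α γ : E}

variable {α γ : E}

lemma reflect_eq_sub (hα : ‖α‖ ^ 2 = 2) (x : E) : reflect α x = x - ⟪α, x⟫ • α := by
  rw [reflect, hα, mul_div_cancel_left₀ _ (two_ne_zero)]

lemma reflect_sub_smul (α u v : E) (c : ℝ) :
    reflect α (u - c • v) = reflect α u - c • reflect α v := by
  simp only [reflect, inner_sub_right, real_inner_smul_right]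
  match_scalars <;> ring

lemma reflect_neg_right (α y : E) : reflect α (-y) = -reflect α y := by
  have := reflect_sub_smul α 0 y 1
  simp only [one_smul, zero_sub] at this
  simpa [reflect] using this

lemma inner_reflect_left (hα : ‖α‖ ^ 2 = 2) (u v : E) :
    ⟪reflect α u, v⟫ = ⟪u, v⟫ - ⟪α, u⟫ * ⟪α, v⟫ := by
  rw [reflect_eq_sub hα, inner_sub_left, real_inner_smul_left]

lemma inner_reflect_right (hα : ‖α‖ ^ 2 = 2) (u v : E) :
    ⟪u, reflect α v⟫ = ⟪u, v⟫ - ⟪α, u⟫ * ⟪α, v⟫ := by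
  rw [real_inner_comm, inner_reflect_left hα, real_inner_comm v u, real_inner_comm v α]
  ring

lemma inner_reflect_reflect (hα : ‖α‖ ^ 2 = 2) (u v : E) :
    ⟪reflect α u, reflect α v⟫ = ⟪u, v⟫ := by
  rw [inner_reflect_left hα, inner_reflect_right hα]
  have h2 : ⟪α, α⟫ = 2 := by rw [real_inner_self_eq_norm_sq, hα]
  rw [inner_reflect_right hα, h2]
  ring

lemma reflect_reflect (hα : ‖α‖ ^ 2 = 2) (x : E) : reflect α (reflect α x) = x := by
  have h2 : ⟪α, α⟫ = 2 := by rw [real_inner_self_eq_norm_sq, hα]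
  rw [reflect_eq_sub hα, reflect_eq_sub hα, inner_sub_right, real_inner_smul_right, h2]
  module

lemma norm_sq_reflect (hα : ‖α‖ ^ 2 = 2) (v : E) : ‖reflect α v‖ ^ 2 = ‖v‖ ^ 2 := by
  rw [← real_inner_self_eq_norm_sq, ← real_inner_self_eq_norm_sq, inner_reflect_reflect hα]

lemma inner_reflect_symm (hα : ‖α‖ ^ 2 = 2) (u v : E) :
    ⟪reflect α u, v⟫ = ⟪u, reflect α v⟫ := by
  rw [inner_reflect_left hα, inner_reflect_right hα]

lemma reflect_conj (hα : ‖α‖ ^ 2 = 2) (hγ : ‖γ‖ ^ 2 = 2) (y : E) :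
    reflect α (reflect γ (reflect α y)) = reflect (reflect α γ) y := by
  have h2 : ‖reflect α γ‖ ^ 2 = 2 := by rw [norm_sq_reflect hα, hγ]
  rw [reflect_eq_sub hγ (reflect α y), reflect_sub_smul, reflect_reflect hα,
    reflect_eq_sub h2, ← inner_reflect_symm hα]

lemma reflect_self (hα : ‖α‖ ^ 2 = 2) : reflect α α = -α := by
  have h2 : ⟪α, α⟫ = 2 := by rw [real_inner_self_eq_norm_sq, hα]
  rw [reflect_eq_sub hα, h2]
  module

def reflectCLM (α : E) : E →L[ℝ] E :=
  ContinuousLinearMap.id ℝ E - (2 / ‖α‖ ^ 2) • ((innerSL ℝ α).smulRight α)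

lemma reflectCLM_apply (α x : E) : reflectCLM α x = reflect α x := by
  simp only [reflectCLM, reflect, ContinuousLinearMap.sub_apply, ContinuousLinearMap.id_apply,
    ContinuousLinearMap.smul_apply, ContinuousLinearMap.smulRight_apply, innerSL_apply_apply]
  rw [smul_smul]
  ring_nf

def reflectLIE (α : E) (hα : ‖α‖ ^ 2 = 2) : E ≃ₗᵢ[ℝ] E :=
  LinearEquiv.isometryOfInner
    (LinearEquiv.ofInvolutive ((reflectCLM α : E →ₗ[ℝ] E))
      (show Function.Involutive ((reflectCLM α : E →ₗ[ℝ] E)) from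
        fun x => by simp only [ContinuousLinearMap.coe_coe, reflectCLM_apply];
                    exact reflect_reflect hα x))
    (fun u v => by simp only [LinearEquiv.coe_ofInvolutive, ContinuousLinearMap.coe_coe,
                     reflectCLM_apply]; exact inner_reflect_reflect hα u v)

lemma reflectLIE_apply (hα : ‖α‖ ^ 2 = 2) (x : E) : reflectLIE α hα x = reflect α x := by
  simp only [reflectLIE, LinearEquiv.coe_isometryOfInner, LinearEquiv.coe_ofInvolutive,
    ContinuousLinearMap.coe_coe, reflectCLM_apply]

def dunklR (R : Finset E) (κ : E → ℂ) (ξ : E) (f : E → ℂ) (x : E) : ℂ :=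
  fderiv ℝ f x ξ +
    (1 / 2) * ∑ α ∈ R, κ α * ((⟪α, ξ⟫ / ⟪α, x⟫ : ℝ) : ℂ) * (f x - f (reflect α x))

variable {R Rp : Finset E} {κ : E → ℂ}

namespace IsRootSystem

lemma reflect_mem (hR : IsRootSystem R) {α γ : E} (hα : α ∈ R) (hγ : γ ∈ R) :
    reflect α γ ∈ R := by
  have h := hR.reflect_eq α hα
  have : reflect α γ ∈ reflect α '' (R : Set E) := ⟨γ, hγ, rfl⟩
  rw [h] at this
  exact_mod_cast this

lemma reflectLIE_mem (hR : IsRootSystem R) {α : E} (hα : α ∈ R) :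
    reflectLIE α (hR.norm_sq α hα) ∈ coxeterGroup R :=
  Subgroup.subset_closure ⟨α, hα, funext fun x => reflectLIE_apply _ x⟩

lemma kappa_reflect (hR : IsRootSystem R)
    (hκ : ∀ u ∈ coxeterGroup R, ∀ α ∈ R, κ (u α) = κ α)
    {α γ : E} (hα : α ∈ R) (hγ : γ ∈ R) : κ (reflect α γ) = κ γ := by
  have := hκ _ (hR.reflectLIE_mem hα) γ hγ
  rwa [reflectLIE_apply] at this

lemma kappa_neg (hR : IsRootSystem R)
    (hκ : ∀ u ∈ coxeterGroup R, ∀ α ∈ R, κ (u α) = κ α)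
    {γ : E} (hγ : γ ∈ R) : κ (-γ) = κ γ := by
  have := hR.kappa_reflect hκ hγ hγ
  rwa [reflect_self (hR.norm_sq γ hγ)] at this

end IsRootSystem

lemma dunkl_eq_dunklR (hRp : IsPositiveSystem R Rp)
    (hκneg : ∀ α ∈ R, κ (-α) = κ α) (ξ : E) (f : E → ℂ) (x : E) :
    dunkl Rp κ ξ f x = dunklR R κ ξ f x := by
  classical
  have hterm : ∀ α : E, κ (-α) * ((⟪-α, ξ⟫ / ⟪-α, x⟫ : ℝ) : ℂ) * (f x - f (reflect (-α) x))
      = κ (-α) * ((⟪α, ξ⟫ / ⟪α, x⟫ : ℝ) : ℂ) * (f x - f (reflect α x)) := by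
    intro α
    have h1 : reflect (-α) x = reflect α x := by
      simp only [reflect, inner_neg_left, norm_neg, smul_neg, mul_neg, neg_div, neg_smul, neg_neg]
    rw [h1, inner_neg_left, inner_neg_left, neg_div_neg_eq]
  have hsplit : R = Rp ∪ Rp.image (fun a => -a) := by
    ext a
    simp only [Finset.mem_union, Finset.mem_image]
    constructor
    · intro ha
      rcases (hRp.1 a).1 ha with h | h
      · exact Or.inl h
      · exact Or.inr ⟨-a, h, neg_neg a⟩
    · rintro (h | ⟨b, hb, rfl⟩)
      · exact (hRp.1 a).2 (Or.inl h)
      · exact (hRp.1 (-b)).2 (Or.inr (by simpa using hb))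
  have hdisj : Disjoint Rp (Rp.image (fun a => -a)) := by
    rw [Finset.disjoint_left]
    rintro a ha hmem
    rcases Finset.mem_image.1 hmem with ⟨b, hb, rfl⟩
    exact hRp.2 b hb (by simpa using ha)
  rw [dunkl, dunklR, hsplit]
  rw [Finset.sum_union hdisj]
  rw [Finset.sum_image (by intro a _ b _ h; simpa using h)]
  have : ∀ a ∈ Rp, κ (-a) * ((⟪-a, ξ⟫ / ⟪-a, x⟫ : ℝ) : ℂ) * (f x - f (reflect (-a) x))
      = κ a * ((⟪a, ξ⟫ / ⟪a, x⟫ : ℝ) : ℂ) * (f x - f (reflect a x)) := by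
    intro a ha
    rw [hterm a, hκneg a ((hRp.1 a).2 (Or.inl ha))]
  rw [Finset.sum_congr rfl this]
  ring

variable {f : E → ℂ} {x ξ η : E}

lemma fderiv_dunklR_apply [CompleteSpace E] (hf : ContDiff ℝ (⊤ : ℕ∞) f)
    (hx : ∀ α ∈ R, ⟪α, x⟫ ≠ 0) (ξ η : E) :
    fderiv ℝ (fun y => dunklR R κ η f y) x ξ =
      (fderiv ℝ (fderiv ℝ f) x ξ) η
      + (1 / 2) * ∑ β ∈ R, κ β *
          ( ((-(⟪β, η⟫ * ⟪β, ξ⟫) / ⟪β, x⟫ ^ 2 : ℝ) : ℂ) * (f x - f (reflect β x))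
            + ((⟪β, η⟫ / ⟪β, x⟫ : ℝ) : ℂ) *
                (fderiv ℝ f x ξ - fderiv ℝ f (reflect β x) (reflect β ξ)) ) := by
  classical
  have hdf : Differentiable ℝ f := hf.differentiable (by simp)
  have hc : ContDiff ℝ (⊤ : ℕ∞) (fderiv ℝ f) := hf.fderiv_right (by exact_mod_cast le_top)
  have hc' : DifferentiableAt ℝ (fderiv ℝ f) x := (hc.differentiable (by simp)).differentiableAt
  -- first term
  have hT1 : HasFDerivAt (fun y => fderiv ℝ f y η)
      ((fderiv ℝ f x).comp (0 : E →L[ℝ] E) + (fderiv ℝ (fderiv ℝ f) x).flip η) x :=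
    hc'.hasFDerivAt.clm_apply (hasFDerivAt_const η x)
  -- summand derivatives
  have hterm : ∀ β ∈ R, HasFDerivAt
      (fun y => κ β * (((⟪β, η⟫ * (⟪β, y⟫)⁻¹ : ℝ) : ℂ) * (f y - f (reflect β y))))
      (κ β • ( ((⟪β, η⟫ * (⟪β, x⟫)⁻¹ : ℝ) : ℂ) •
                 (fderiv ℝ f x - (fderiv ℝ f (reflect β x)).comp (reflectCLM β))
               + (f x - f (reflect β x)) •
                 (Complex.ofRealCLM.comp
                   (⟪β, η⟫ • ((ContinuousLinearMap.smulRight (1 : ℝ →L[ℝ] ℝ)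
                      (-(⟪β, x⟫ ^ 2)⁻¹)).comp (innerSL ℝ β)))) )) x := by
    intro β hβ
    have hne : ⟪β, x⟫ ≠ 0 := hx β hβ
    have hinner : HasFDerivAt (fun y : E => ⟪β, y⟫) (innerSL ℝ β) x :=
      (innerSL ℝ β).hasFDerivAt
    have hinv : HasFDerivAt (fun y : E => (⟪β, y⟫)⁻¹)
        ((ContinuousLinearMap.smulRight (1 : ℝ →L[ℝ] ℝ)
           (-(⟪β, x⟫ ^ 2)⁻¹)).comp (innerSL ℝ β)) x :=
      (hasFDerivAt_inv hne).comp x hinner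
    have hq0 : HasFDerivAt (fun y : E => ⟪β, η⟫ * (⟪β, y⟫)⁻¹)
        (⟪β, η⟫ • ((ContinuousLinearMap.smulRight (1 : ℝ →L[ℝ] ℝ)
           (-(⟪β, x⟫ ^ 2)⁻¹)).comp (innerSL ℝ β))) x := hinv.const_mul _
    have hq : HasFDerivAt (fun y : E => ((⟪β, η⟫ * (⟪β, y⟫)⁻¹ : ℝ) : ℂ))
        (Complex.ofRealCLM.comp
          (⟪β, η⟫ • ((ContinuousLinearMap.smulRight (1 : ℝ →L[ℝ] ℝ)
             (-(⟪β, x⟫ ^ 2)⁻¹)).comp (innerSL ℝ β)))) x :=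
      Complex.ofRealCLM.hasFDerivAt.comp x hq0
    have hfσ : HasFDerivAt (fun y => f (reflect β y))
        ((fderiv ℝ f (reflect β x)).comp (reflectCLM β)) x := by
      have hg : HasFDerivAt f (fderiv ℝ f (reflect β x)) (reflectCLM β x) := by
        rw [reflectCLM_apply]; exact (hdf (reflect β x)).hasFDerivAt
      have h := hg.comp x (reflectCLM β).hasFDerivAt
      simpa only [Function.comp_def, reflectCLM_apply] using h
    have hs : HasFDerivAt (fun y => f y - f (reflect β y))
        (fderiv ℝ f x - (fderiv ℝ f (reflect β x)).comp (reflectCLM β)) x :=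
      (hdf x).hasFDerivAt.sub hfσ
    exact (hq.mul hs).const_mul (κ β)
  have hsum := HasFDerivAt.fun_sum hterm
  have hG := hT1.fun_add (hsum.const_mul ((1 : ℂ) / 2))
  have hfun : (fun y => dunklR R κ η f y)
      = fun y => fderiv ℝ f y η + (1 / 2) *
          ∑ β ∈ R, κ β * (((⟪β, η⟫ * (⟪β, y⟫)⁻¹ : ℝ) : ℂ) * (f y - f (reflect β y))) := by
    funext y
    simp only [dunklR, mul_assoc, div_eq_mul_inv]
  rw [hfun, hG.fderiv]
  simp only [ContinuousLinearMap.add_apply, ContinuousLinearMap.smul_apply,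
    ContinuousLinearMap.coe_sum', Finset.sum_apply, ContinuousLinearMap.comp_apply,
    ContinuousLinearMap.smulRight_apply, ContinuousLinearMap.one_apply, innerSL_apply_apply,
    Complex.ofRealCLM_apply, reflectCLM_apply, ContinuousLinearMap.coe_sub',
    Pi.sub_apply, ContinuousLinearMap.flip_apply, ContinuousLinearMap.zero_apply,
    map_zero, smul_eq_mul, Finset.mul_sum]
  congr 1
  · ring
  · apply Finset.sum_congr rfl
    intro β hβ
    have hne : ⟪β, x⟫ ≠ 0 := hx β hβ
    have hneC : ((⟪β, x⟫ : ℝ) : ℂ) ≠ 0 := by exact_mod_cast hne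
    push_cast
    field_simp
    ring

def Mbil (ξ η u v : E) : ℝ := ⟪u, ξ⟫ * ⟪v, η⟫ - ⟪u, η⟫ * ⟪v, ξ⟫

def zvec (x : E) (p : E × E) : E :=
  ((2 * ⟪p.1, x⟫ - ⟪p.1, p.2⟫ * ⟪p.2, x⟫) / (4 - ⟪p.1, p.2⟫ ^ 2)) • p.1 +
    ((2 * ⟪p.2, x⟫ - ⟪p.1, p.2⟫ * ⟪p.1, x⟫) / (4 - ⟪p.1, p.2⟫ ^ 2)) • p.2

lemma zvec_rep (x : E) (q : E × E) : ∃ c d : ℝ, zvec x q = c • q.1 + d • q.2 :=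
  ⟨_, _, rfl⟩

variable {α γ x ξ η : E}

lemma inner_zvec_left (hαα : ⟪α, α⟫ = 2) (hγγ : ⟪γ, γ⟫ = 2)
    (hd : 4 - ⟪α, γ⟫ ^ 2 ≠ 0) : ⟪α, zvec x (α, γ)⟫ = ⟪α, x⟫ := by
  have hc : ⟪γ, α⟫ = ⟪α, γ⟫ := real_inner_comm _ _
  simp only [zvec, inner_add_right, real_inner_smul_right, hαα]
  field_simp
  ring

lemma inner_zvec_right (hαα : ⟪α, α⟫ = 2) (hγγ : ⟪γ, γ⟫ = 2)
    (hd : 4 - ⟪α, γ⟫ ^ 2 ≠ 0) : ⟪γ, zvec x (α, γ)⟫ = ⟪γ, x⟫ := by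
  have hc : ⟪γ, α⟫ = ⟪α, γ⟫ := real_inner_comm _ _
  simp only [zvec, inner_add_right, real_inner_smul_right, hγγ, hc]
  field_simp
  ring

lemma span_uniq (α γ z₁ z₂ : E) (h₁ : ∃ c d : ℝ, z₁ = c • α + d • γ)
    (h₂ : ∃ c d : ℝ, z₂ = c • α + d • γ)
    (ha : ⟪α, z₁⟫ = ⟪α, z₂⟫) (hg : ⟪γ, z₁⟫ = ⟪γ, z₂⟫) : z₁ = z₂ := by
  obtain ⟨c1, c2, h₁⟩ := h₁
  obtain ⟨c3, c4, h₂⟩ := h₂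
  have hα0 : ⟪α, z₁ - z₂⟫ = 0 := by rw [inner_sub_right, ha, sub_self]
  have hγ0 : ⟪γ, z₁ - z₂⟫ = 0 := by rw [inner_sub_right, hg, sub_self]
  have e : z₁ - z₂ = (c1 - c3) • α + (c2 - c4) • γ := by rw [h₁, h₂]; module
  have hw : ⟪z₁ - z₂, z₁ - z₂⟫ = 0 := by
    nth_rewrite 1 [e]
    rw [inner_add_left, real_inner_smul_left, real_inner_smul_left, hα0, hγ0]
    ring
  have := inner_self_eq_zero.mp hw
  exact sub_eq_zero.mp this

lemma rep_change (hγ2 : ‖γ‖ ^ 2 = 2) (c d : ℝ) :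
    c • γ + d • reflect γ α = d • α + (c - d * ⟪γ, α⟫) • γ := by
  rw [reflect_eq_sub hγ2]; module

lemma inner_via_reflect (hγ2 : ‖γ‖ ^ 2 = 2) (v : E) :
    ⟪α, v⟫ = ⟪reflect γ α, v⟫ + ⟪γ, α⟫ * ⟪γ, v⟫ := by
  rw [reflect_eq_sub hγ2, inner_sub_left, real_inner_smul_left]; ring

lemma frac_split (hαα : ⟪α, α⟫ = 2) (hγγ : ⟪γ, γ⟫ = 2) (hd : 4 - ⟪α, γ⟫ ^ 2 ≠ 0)
    (hpα : ⟪α, x⟫ ≠ 0) (hpγ : ⟪γ, x⟫ ≠ 0) (ξ η : E) :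
    Mbil ξ η α γ / (⟪α, x⟫ * ⟪γ, x⟫)
      = Mbil ξ η α (zvec x (α, γ)) / (⟪α, x⟫ * ⟪zvec x (α, γ), zvec x (α, γ)⟫)
        - Mbil ξ η γ (zvec x (α, γ)) / (⟪γ, x⟫ * ⟪zvec x (α, γ), zvec x (α, γ)⟫) := by
  set a : ℝ := (2 * ⟪α, x⟫ - ⟪α, γ⟫ * ⟪γ, x⟫) / (4 - ⟪α, γ⟫ ^ 2) with ha
  set b : ℝ := (2 * ⟪γ, x⟫ - ⟪α, γ⟫ * ⟪α, x⟫) / (4 - ⟪α, γ⟫ ^ 2) with hb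
  have hzdef : zvec x (α, γ) = a • α + b • γ := rfl
  have hMα : Mbil ξ η α (zvec x (α, γ)) = b * Mbil ξ η α γ := by
    rw [hzdef]; simp only [Mbil, inner_add_left, real_inner_smul_left]; ring
  have hMγ : Mbil ξ η γ (zvec x (α, γ)) = -a * Mbil ξ η α γ := by
    rw [hzdef]; simp only [Mbil, inner_add_left, real_inner_smul_left]; ring
  have hZZ : ⟪zvec x (α, γ), zvec x (α, γ)⟫ = a * ⟪α, x⟫ + b * ⟪γ, x⟫ := by
    nth_rewrite 1 [hzdef]
    rw [inner_add_left, real_inner_smul_left, real_inner_smul_left,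
      inner_zvec_left hαα hγγ hd, inner_zvec_right hαα hγγ hd]
  have hzne : a * ⟪α, x⟫ + b * ⟪γ, x⟫ ≠ 0 := by
    intro h0
    have : ⟪zvec x (α, γ), zvec x (α, γ)⟫ = 0 := by rw [hZZ, h0]
    have hz0 : zvec x (α, γ) = 0 := inner_self_eq_zero.mp this
    have : ⟪α, x⟫ = 0 := by
      rw [← inner_zvec_left hαα hγγ hd (x := x), hz0, inner_zero_right]
    exact hpα this
  rw [hMα, hMγ, hZZ]
  field_simp
  rw [eq_div_iff (by contrapose! hzne; linarith)]
  ring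

variable {R : Finset E} {κ : E → ℂ}

lemma key_cancel (hR : IsRootSystem R)
    (hκ : ∀ u ∈ coxeterGroup R, ∀ α ∈ R, κ (u α) = κ α)
    {x : E} (hx : ∀ α ∈ R, ⟪α, x⟫ ≠ 0) (f : E → ℂ) (ξ η : E) :
    ∑ p ∈ R ×ˢ R, (κ p.1 * κ p.2) *
        ((Mbil ξ η p.1 p.2 / (⟪p.1, x⟫ * ⟪p.2, x⟫) : ℝ) : ℂ) *
        f (reflect p.1 (reflect p.2 x)) = 0 := by
  classical
  set T : E × E → ℂ := fun p => (κ p.1 * κ p.2) *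
      ((Mbil ξ η p.1 p.2 / (⟪p.1, x⟫ * ⟪p.2, x⟫) : ℝ) : ℂ) *
      f (reflect p.1 (reflect p.2 x)) with hT
  set P : Finset (E × E) := (R ×ˢ R).filter (fun p => p.2 ≠ p.1 ∧ p.2 ≠ -p.1) with hPdef
  have hmemP : ∀ {p : E × E}, p ∈ P → p.1 ∈ R ∧ p.2 ∈ R ∧ p.2 ≠ p.1 ∧ p.2 ≠ -p.1 := by
    intro p hp
    rw [hPdef, Finset.mem_filter, Finset.mem_product] at hp
    tauto
  have step1 : ∑ p ∈ R ×ˢ R, T p = ∑ p ∈ P, T p := by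
    rw [hPdef]
    refine (Finset.sum_filter_of_ne ?_).symm
    intro p _ hTne
    constructor
    · intro h1
      apply hTne
      have hM0 : Mbil ξ η p.1 p.2 = 0 := by rw [h1]; simp only [Mbil]; ring
      simp [hT, hM0]
    · intro h2
      apply hTne
      have hM0 : Mbil ξ η p.1 p.2 = 0 := by
        rw [h2]; simp only [Mbil, inner_neg_left]; ring
      simp [hT, hM0]
  -- basic facts for pairs in P
  have hfacts : ∀ {p : E × E}, p ∈ P →
      (⟪p.1, p.1⟫ = 2) ∧ (⟪p.2, p.2⟫ = 2) ∧ (4 - ⟪p.1, p.2⟫ ^ 2 ≠ 0) := by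
    intro p hp
    obtain ⟨h1R, h2R, hne1, hne2⟩ := hmemP hp
    have hn1 : ‖p.1‖ ^ 2 = 2 := hR.norm_sq _ h1R
    have hn2 : ‖p.2‖ ^ 2 = 2 := hR.norm_sq _ h2R
    refine ⟨by rw [real_inner_self_eq_norm_sq, hn1],
      by rw [real_inner_self_eq_norm_sq, hn2], ?_⟩
    intro h0
    have hsq : ⟪p.1, p.2⟫ ^ 2 = 4 := by linarith
    have hG : ⟪p.1, p.2⟫ = 2 ∨ ⟪p.1, p.2⟫ = -2 := by
      have : (⟪p.1, p.2⟫ - 2) * (⟪p.1, p.2⟫ + 2) = 0 := by nlinarith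
      rcases mul_eq_zero.mp this with h | h
      · left; linarith
      · right; linarith
    have e1 : ‖p.1‖ = Real.sqrt 2 := by rw [← Real.sqrt_sq (norm_nonneg p.1), hn1]
    have e2 : ‖p.2‖ = Real.sqrt 2 := by rw [← Real.sqrt_sq (norm_nonneg p.2), hn2]
    have hprod : ‖p.1‖ * ‖p.2‖ = 2 := by
      rw [e1, e2, Real.mul_self_sqrt (by norm_num : (0:ℝ) ≤ 2)]
    have hx0 : p.1 ≠ 0 := hR.nonzero _ h1R
    have hy0 : p.2 ≠ 0 := hR.nonzero _ h2R
    have heq : ‖⟪p.1, p.2⟫‖ = ‖p.1‖ * ‖p.2‖ := by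
      rw [Real.norm_eq_abs, hprod]
      rcases hG with h | h <;> rw [h] <;> norm_num
    obtain ⟨r, hr0, hry⟩ := (norm_inner_eq_norm_iff hx0 hy0).mp heq
    rcases hR.smul_mem p.1 h1R r (by rw [← hry]; exact h2R) with h | h
    · exact hne1 (by rw [hry, h, one_smul])
    · exact hne2 (by rw [hry, h]; module)
  have hZ1 : ∀ {p : E × E}, p ∈ P → ⟪p.1, zvec x p⟫ = ⟪p.1, x⟫ := by
    intro p hp
    obtain ⟨h11, h22, hd⟩ := hfacts hp
    exact inner_zvec_left h11 h22 hd
  have hZ2 : ∀ {p : E × E}, p ∈ P → ⟪p.2, zvec x p⟫ = ⟪p.2, x⟫ := by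
    intro p hp
    obtain ⟨h11, h22, hd⟩ := hfacts hp
    exact inner_zvec_right h11 h22 hd
  -- split T into two parts
  set F1 : E × E → ℂ := fun p => (κ p.1 * κ p.2) *
      ((Mbil ξ η p.1 (zvec x p) / (⟪p.1, x⟫ * ⟪zvec x p, zvec x p⟫) : ℝ) : ℂ) *
      f (reflect p.1 (reflect p.2 x)) with hF1
  set F2 : E × E → ℂ := fun p => (κ p.1 * κ p.2) *
      ((Mbil ξ η p.2 (zvec x p) / (⟪p.2, x⟫ * ⟪zvec x p, zvec x p⟫) : ℝ) : ℂ) *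
      f (reflect p.1 (reflect p.2 x)) with hF2
  have hsplitT : ∀ p ∈ P, T p = F1 p - F2 p := by
    intro p hp
    obtain ⟨h1R, h2R, hne1, hne2⟩ := hmemP hp
    obtain ⟨h11, h22, hd⟩ := hfacts hp
    have hfr := frac_split h11 h22 hd (hx _ h1R) (hx _ h2R) ξ η (x := x)
    rw [hT, hF1, hF2]
    simp only
    rw [hfr]
    push_cast
    ring
  -- the reindexing bijection
  set Ψ : E × E → E × E := fun p => (p.2, reflect p.2 p.1) with hΨ
  set Ψ' : E × E → E × E := fun q => (reflect q.1 q.2, q.1) with hΨ'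
  have hΨmem : ∀ p ∈ P, Ψ p ∈ P := by
    intro p hp
    obtain ⟨h1R, h2R, hne1, hne2⟩ := hmemP hp
    have h2n : ‖p.2‖ ^ 2 = 2 := hR.norm_sq _ h2R
    rw [hPdef, Finset.mem_filter, Finset.mem_product]
    refine ⟨⟨h2R, hR.reflect_mem h2R h1R⟩, ?_, ?_⟩
    · intro h
      have := congrArg (reflect p.2) h
      rw [reflect_reflect h2n, reflect_self h2n] at this
      exact hne2 (by rw [this, neg_neg])
    · intro h
      have := congrArg (reflect p.2) h
      rw [reflect_reflect h2n, reflect_neg_right, reflect_self h2n, neg_neg] at this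
      exact hne1 this.symm
  have hΨ'mem : ∀ q ∈ P, Ψ' q ∈ P := by
    intro q hq
    obtain ⟨h1R, h2R, hne1, hne2⟩ := hmemP hq
    have h1n : ‖q.1‖ ^ 2 = 2 := hR.norm_sq _ h1R
    rw [hPdef, Finset.mem_filter, Finset.mem_product]
    refine ⟨⟨hR.reflect_mem h1R h2R, h1R⟩, ?_, ?_⟩
    · intro h
      have := congrArg (reflect q.1) h.symm
      rw [reflect_reflect h1n, reflect_self h1n] at this
      exact hne2 this
    · intro h
      have h' : reflect q.1 q.2 = -q.1 := by rw [← neg_neg (reflect q.1 q.2), ← h]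
      have := congrArg (reflect q.1) h'
      rw [reflect_reflect h1n, reflect_neg_right, reflect_self h1n, neg_neg] at this
      exact hne1 (this ▸ rfl)
  have hleft : ∀ p ∈ P, Ψ' (Ψ p) = p := by
    intro p hp
    obtain ⟨h1R, h2R, _, _⟩ := hmemP hp
    have h2n : ‖p.2‖ ^ 2 = 2 := hR.norm_sq _ h2R
    rw [hΨ, hΨ']
    simp only
    rw [reflect_reflect h2n]
  have hright : ∀ q ∈ P, Ψ (Ψ' q) = q := by
    intro q hq
    obtain ⟨h1R, h2R, _, _⟩ := hmemP hq
    have h1n : ‖q.1‖ ^ 2 = 2 := hR.norm_sq _ h1R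
    rw [hΨ, hΨ']
    simp only
    rw [reflect_reflect h1n]
  have hmatch : ∀ p ∈ P, F2 p = F1 (Ψ p) := by
    intro p hp
    obtain ⟨h1R, h2R, hne1, hne2⟩ := hmemP hp
    have h1n : ‖p.1‖ ^ 2 = 2 := hR.norm_sq _ h1R
    have h2n : ‖p.2‖ ^ 2 = 2 := hR.norm_sq _ h2R
    have hpΨ := hΨmem p hp
    -- z is the same for p and Ψ p
    have hzΨ : zvec x (Ψ p) = zvec x p := by
      apply span_uniq p.1 p.2
      · obtain ⟨c, d, hz⟩ := zvec_rep x (Ψ p)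
        exact ⟨d, c - d * ⟪p.2, p.1⟫, by rw [hz]; exact rep_change h2n c d⟩
      · exact ⟨_, _, rfl⟩
      · rw [hZ1 hp]
        rw [inner_via_reflect h2n (zvec x (Ψ p)) (α := p.1)]
        have e1 : ⟪reflect p.2 p.1, zvec x (Ψ p)⟫ = ⟪reflect p.2 p.1, x⟫ := hZ2 hpΨ
        have e2 : ⟪p.2, zvec x (Ψ p)⟫ = ⟪p.2, x⟫ := hZ1 hpΨ
        rw [e1, e2, ← inner_via_reflect h2n x (α := p.1)]
      · rw [hZ2 hp]
        exact hZ1 hpΨ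
    have hκr : κ (reflect p.2 p.1) = κ p.1 := hR.kappa_reflect hκ h2R h1R
    have hfarg : reflect p.2 (reflect (reflect p.2 p.1) x) = reflect p.1 (reflect p.2 x) := by
      rw [← reflect_conj h2n h1n x, reflect_reflect h2n]
    rw [hF1, hF2, hΨ]
    simp only
    rw [hzΨ, hκr, hfarg]
    ring
  -- conclude
  rw [step1, Finset.sum_congr rfl hsplitT, Finset.sum_sub_distrib]
  have : ∑ p ∈ P, F2 p = ∑ p ∈ P, F1 p :=
    Finset.sum_nbij' Ψ Ψ' hΨmem hΨ'mem hleft hright hmatch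
  rw [this, sub_self]

lemma swap_sum (R : Finset E) (g : E → E → ℂ) :
    ∑ p ∈ R ×ˢ R, g p.1 p.2 = ∑ p ∈ R ×ˢ R, g p.2 p.1 := by
  rw [Finset.sum_product' (f := g), Finset.sum_comm,
    ← Finset.sum_product' (f := fun a b => g b a)]

variable {R : Finset E} {κ : E → ℂ}

lemma D_symm {x : E} (hR : IsRootSystem R)
    (hκ : ∀ u ∈ coxeterGroup R, ∀ α ∈ R, κ (u α) = κ α)
    (hx : ∀ α ∈ R, ⟪α, x⟫ ≠ 0) (f : E → ℂ) (ξ η : E) :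
    ∑ α ∈ R, ∑ β ∈ R, (κ α * κ β) * ((⟪α, ξ⟫ / ⟪α, x⟫ : ℝ) : ℂ) *
        ( ((⟪β, η⟫ / ⟪β, x⟫ : ℝ) : ℂ) * (f x - f (reflect β x))
          - ((⟪β, η⟫ / ⟪β, reflect α x⟫ : ℝ) : ℂ) *
              (f (reflect α x) - f (reflect β (reflect α x))) )
    = ∑ α ∈ R, ∑ β ∈ R, (κ α * κ β) * ((⟪α, η⟫ / ⟪α, x⟫ : ℝ) : ℂ) *
        ( ((⟪β, ξ⟫ / ⟪β, x⟫ : ℝ) : ℂ) * (f x - f (reflect β x))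
          - ((⟪β, ξ⟫ / ⟪β, reflect α x⟫ : ℝ) : ℂ) *
              (f (reflect α x) - f (reflect β (reflect α x))) ) := by
  classical
  have hmem : ∀ {p : E × E}, p ∈ R ×ˢ R → p.1 ∈ R ∧ p.2 ∈ R := by
    intro p hp; rwa [Finset.mem_product] at hp
  rw [← sub_eq_zero]
  rw [← Finset.sum_product' (f := fun α β => (κ α * κ β) * ((⟪α, ξ⟫ / ⟪α, x⟫ : ℝ) : ℂ) *
        ( ((⟪β, η⟫ / ⟪β, x⟫ : ℝ) : ℂ) * (f x - f (reflect β x))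
          - ((⟪β, η⟫ / ⟪β, reflect α x⟫ : ℝ) : ℂ) *
              (f (reflect α x) - f (reflect β (reflect α x))) ))]
  rw [← Finset.sum_product' (f := fun α β => (κ α * κ β) * ((⟪α, η⟫ / ⟪α, x⟫ : ℝ) : ℂ) *
        ( ((⟪β, ξ⟫ / ⟪β, x⟫ : ℝ) : ℂ) * (f x - f (reflect β x))
          - ((⟪β, ξ⟫ / ⟪β, reflect α x⟫ : ℝ) : ℂ) *
              (f (reflect α x) - f (reflect β (reflect α x))) ))]
  -- reindexing of the second part, for generic direction vectors ζ (outer) and θ (inner)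
  have reindex : ∀ ζ θ : E,
      ∑ p ∈ R ×ˢ R, (κ p.1 * κ p.2) * ((⟪p.1, ζ⟫ / ⟪p.1, x⟫ : ℝ) : ℂ) *
          (((⟪p.2, θ⟫ / ⟪p.2, reflect p.1 x⟫ : ℝ) : ℂ) *
            (f (reflect p.1 x) - f (reflect p.2 (reflect p.1 x))))
      = ∑ p ∈ R ×ˢ R, (κ p.1 * κ p.2) * ((⟪p.1, ζ⟫ / ⟪p.1, x⟫ : ℝ) : ℂ) *
          ((((⟪p.2, θ⟫ - ⟪p.1, p.2⟫ * ⟪p.1, θ⟫) / ⟪p.2, x⟫ : ℝ) : ℂ) *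
            (f (reflect p.1 x) - f (reflect p.1 (reflect p.2 x)))) := by
    intro ζ θ
    refine (Finset.sum_nbij' (fun p => (p.1, reflect p.1 p.2)) (fun p => (p.1, reflect p.1 p.2))
      ?_ ?_ ?_ ?_ ?_).symm
    · intro p hp
      obtain ⟨h1, h2⟩ := hmem hp
      rw [Finset.mem_product]
      exact ⟨h1, hR.reflect_mem h1 h2⟩
    · intro p hp
      obtain ⟨h1, h2⟩ := hmem hp
      rw [Finset.mem_product]
      exact ⟨h1, hR.reflect_mem h1 h2⟩
    · intro p hp
      obtain ⟨h1, _⟩ := hmem hp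
      simp only [reflect_reflect (hR.norm_sq _ h1)]
    · intro p hp
      obtain ⟨h1, _⟩ := hmem hp
      simp only [reflect_reflect (hR.norm_sq _ h1)]
    · intro p hp
      obtain ⟨h1, h2⟩ := hmem hp
      have h1n : ‖p.1‖ ^ 2 = 2 := hR.norm_sq _ h1
      have h2n : ‖p.2‖ ^ 2 = 2 := hR.norm_sq _ h2
      have hκr : κ (reflect p.1 p.2) = κ p.2 := hR.kappa_reflect hκ h1 h2
      have hi1 : ⟪reflect p.1 p.2, θ⟫ = ⟪p.2, θ⟫ - ⟪p.1, p.2⟫ * ⟪p.1, θ⟫ :=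
        inner_reflect_left h1n p.2 θ
      have hi2 : ⟪reflect p.1 p.2, reflect p.1 x⟫ = ⟪p.2, x⟫ :=
        inner_reflect_reflect h1n p.2 x
      have hi3 : reflect (reflect p.1 p.2) (reflect p.1 x) = reflect p.1 (reflect p.2 x) := by
        rw [← reflect_conj h1n h2n (reflect p.1 x), reflect_reflect h1n]
      simp only [hκr, hi1, hi2, hi3]
  -- split each side into two sums and reindex the second ones
  have hsplit : ∀ (ζ θ : E),
      ∑ p ∈ R ×ˢ R, (κ p.1 * κ p.2) * ((⟪p.1, ζ⟫ / ⟪p.1, x⟫ : ℝ) : ℂ) *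
        ( ((⟪p.2, θ⟫ / ⟪p.2, x⟫ : ℝ) : ℂ) * (f x - f (reflect p.2 x))
          - ((⟪p.2, θ⟫ / ⟪p.2, reflect p.1 x⟫ : ℝ) : ℂ) *
              (f (reflect p.1 x) - f (reflect p.2 (reflect p.1 x))) )
      = ∑ p ∈ R ×ˢ R, ((κ p.1 * κ p.2) * ((⟪p.1, ζ⟫ / ⟪p.1, x⟫ : ℝ) : ℂ) *
            (((⟪p.2, θ⟫ / ⟪p.2, x⟫ : ℝ) : ℂ) * (f x - f (reflect p.2 x)))
          - (κ p.1 * κ p.2) * ((⟪p.1, ζ⟫ / ⟪p.1, x⟫ : ℝ) : ℂ) *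
            ((((⟪p.2, θ⟫ - ⟪p.1, p.2⟫ * ⟪p.1, θ⟫) / ⟪p.2, x⟫ : ℝ) : ℂ) *
              (f (reflect p.1 x) - f (reflect p.1 (reflect p.2 x))))) := by
    intro ζ θ
    rw [Finset.sum_sub_distrib, ← reindex ζ θ, ← Finset.sum_sub_distrib]
    exact Finset.sum_congr rfl fun p _ => by ring
  rw [hsplit ξ η, hsplit η ξ, ← Finset.sum_sub_distrib]
  -- rewrite each term using `Mbil`
  have hstep : ∀ p ∈ R ×ˢ R,
      ((κ p.1 * κ p.2) * ((⟪p.1, ξ⟫ / ⟪p.1, x⟫ : ℝ) : ℂ) *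
          (((⟪p.2, η⟫ / ⟪p.2, x⟫ : ℝ) : ℂ) * (f x - f (reflect p.2 x)))
        - (κ p.1 * κ p.2) * ((⟪p.1, ξ⟫ / ⟪p.1, x⟫ : ℝ) : ℂ) *
          ((((⟪p.2, η⟫ - ⟪p.1, p.2⟫ * ⟪p.1, η⟫) / ⟪p.2, x⟫ : ℝ) : ℂ) *
            (f (reflect p.1 x) - f (reflect p.1 (reflect p.2 x)))))
      - ((κ p.1 * κ p.2) * ((⟪p.1, η⟫ / ⟪p.1, x⟫ : ℝ) : ℂ) *
          (((⟪p.2, ξ⟫ / ⟪p.2, x⟫ : ℝ) : ℂ) * (f x - f (reflect p.2 x)))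
        - (κ p.1 * κ p.2) * ((⟪p.1, η⟫ / ⟪p.1, x⟫ : ℝ) : ℂ) *
          ((((⟪p.2, ξ⟫ - ⟪p.1, p.2⟫ * ⟪p.1, ξ⟫) / ⟪p.2, x⟫ : ℝ) : ℂ) *
            (f (reflect p.1 x) - f (reflect p.1 (reflect p.2 x)))))
      = ((κ p.1 * κ p.2) * ((Mbil ξ η p.1 p.2 / (⟪p.1, x⟫ * ⟪p.2, x⟫) : ℝ) : ℂ) * f x
          - (κ p.1 * κ p.2) * ((Mbil ξ η p.1 p.2 / (⟪p.1, x⟫ * ⟪p.2, x⟫) : ℝ) : ℂ)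
              * f (reflect p.2 x))
        - ((κ p.1 * κ p.2) * ((Mbil ξ η p.1 p.2 / (⟪p.1, x⟫ * ⟪p.2, x⟫) : ℝ) : ℂ)
              * f (reflect p.1 x)
          - (κ p.1 * κ p.2) * ((Mbil ξ η p.1 p.2 / (⟪p.1, x⟫ * ⟪p.2, x⟫) : ℝ) : ℂ)
              * f (reflect p.1 (reflect p.2 x))) := by
    intro p hp
    obtain ⟨h1, h2⟩ := hmem hp
    have hp1 : ⟪p.1, x⟫ ≠ 0 := hx _ h1
    have hp2 : ⟪p.2, x⟫ ≠ 0 := hx _ h2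
    simp only [Mbil]
    push_cast
    field_simp
    ring
  rw [Finset.sum_congr rfl hstep]
  rw [Finset.sum_sub_distrib, Finset.sum_sub_distrib, Finset.sum_sub_distrib]
  -- now four sums; the first vanishes by antisymmetry, 2nd+3rd cancel, 4th is `key_cancel`
  have hMswap : ∀ a b : E, Mbil ξ η b a = -Mbil ξ η a b := by
    intro a b; simp only [Mbil]; ring
  have h0 : ∑ p ∈ R ×ˢ R,
      (κ p.1 * κ p.2) * ((Mbil ξ η p.1 p.2 / (⟪p.1, x⟫ * ⟪p.2, x⟫) : ℝ) : ℂ) * f x = 0 := by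
    have hsw := swap_sum R (fun a b =>
      (κ a * κ b) * ((Mbil ξ η a b / (⟪a, x⟫ * ⟪b, x⟫) : ℝ) : ℂ) * f x)
    have hneg : ∀ p : E × E,
        (κ p.2 * κ p.1) * ((Mbil ξ η p.2 p.1 / (⟪p.2, x⟫ * ⟪p.1, x⟫) : ℝ) : ℂ) * f x
        = -((κ p.1 * κ p.2) * ((Mbil ξ η p.1 p.2 / (⟪p.1, x⟫ * ⟪p.2, x⟫) : ℝ) : ℂ) * f x) := by
      intro p
      rw [hMswap p.1 p.2]
      push_cast
      ring
    rw [Finset.sum_congr rfl (fun p _ => hneg p), Finset.sum_neg_distrib] at hsw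
    linear_combination (1 / 2 : ℂ) * hsw
  have h23 : ∑ p ∈ R ×ˢ R,
        (κ p.1 * κ p.2) * ((Mbil ξ η p.1 p.2 / (⟪p.1, x⟫ * ⟪p.2, x⟫) : ℝ) : ℂ)
          * f (reflect p.2 x)
      = - ∑ p ∈ R ×ˢ R,
        (κ p.1 * κ p.2) * ((Mbil ξ η p.1 p.2 / (⟪p.1, x⟫ * ⟪p.2, x⟫) : ℝ) : ℂ)
          * f (reflect p.1 x) := by
    have hsw := swap_sum R (fun a b =>
      (κ a * κ b) * ((Mbil ξ η a b / (⟪a, x⟫ * ⟪b, x⟫) : ℝ) : ℂ) * f (reflect b x))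
    rw [hsw]
    rw [← Finset.sum_neg_distrib]
    refine Finset.sum_congr rfl fun p _ => ?_
    rw [hMswap p.1 p.2]
    push_cast
    ring
  have h4 := key_cancel hR hκ hx f ξ η
  rw [h0, h23, h4, zero_sub, sub_eq_zero]
  simp

lemma dunklR_comm [FiniteDimensional ℝ E] {R : Finset E} {κ : E → ℂ}
    (hR : IsRootSystem R)
    (hκ : ∀ u ∈ coxeterGroup R, ∀ α ∈ R, κ (u α) = κ α)
    {f : E → ℂ} (hf : ContDiff ℝ (⊤ : ℕ∞) f) {x : E}
    (hx : ∀ α ∈ R, ⟪α, x⟫ ≠ 0) (ξ η : E) :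
    dunklR R κ ξ (fun y => dunklR R κ η f y) x
      = dunklR R κ η (fun y => dunklR R κ ξ f y) x := by
  classical
  have hfd_ξη := fderiv_dunklR_apply (κ := κ) (R := R) hf hx ξ η
  have hfd_ηξ := fderiv_dunklR_apply (κ := κ) (R := R) hf hx η ξ
  have hsymm : (fderiv ℝ (fderiv ℝ f) x ξ) η = (fderiv ℝ (fderiv ℝ f) x η) ξ := by
    have h2 : (2 : WithTop ℕ∞) ≤ ((⊤ : ℕ∞) : WithTop ℕ∞) := by
      refine le_trans ?_ (WithTop.coe_le_coe.mpr (le_top : (2:ℕ∞) ≤ ⊤))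
      exact_mod_cast le_rfl
    have h := (hf.contDiffAt (x := x)).isSymmSndFDerivAt (by rw [minSmoothness_of_isRCLikeNormedField]; exact h2)
    exact h ξ η
  conv_lhs => rw [dunklR]
  conv_rhs => rw [dunklR]
  rw [hfd_ξη, hfd_ηξ]
  -- unfold the remaining inner `dunklR` values
  simp only [dunklR]
  -- reshape the third term of each side
  have shape : ∀ ζ θ : E,
      (1 / 2 : ℂ) * ∑ α ∈ R, κ α * ((⟪α, ζ⟫ / ⟪α, x⟫ : ℝ) : ℂ) *
        ((fderiv ℝ f x θ + (1 / 2) * ∑ β ∈ R, κ β * ((⟪β, θ⟫ / ⟪β, x⟫ : ℝ) : ℂ) *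
            (f x - f (reflect β x)))
          - (fderiv ℝ f (reflect α x) θ + (1 / 2) *
              ∑ β ∈ R, κ β * ((⟪β, θ⟫ / ⟪β, reflect α x⟫ : ℝ) : ℂ) *
                (f (reflect α x) - f (reflect β (reflect α x)))))
      = (1 / 2 : ℂ) * ∑ α ∈ R, κ α * ((⟪α, ζ⟫ / ⟪α, x⟫ : ℝ) : ℂ) *
          (fderiv ℝ f x θ - fderiv ℝ f (reflect α x) θ)
        + (1 / 4 : ℂ) * ∑ α ∈ R, ∑ β ∈ R, (κ α * κ β) * ((⟪α, ζ⟫ / ⟪α, x⟫ : ℝ) : ℂ) *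
            ( ((⟪β, θ⟫ / ⟪β, x⟫ : ℝ) : ℂ) * (f x - f (reflect β x))
              - ((⟪β, θ⟫ / ⟪β, reflect α x⟫ : ℝ) : ℂ) *
                  (f (reflect α x) - f (reflect β (reflect α x))) ) := by
    intro ζ θ
    have hinner : ∀ α : E, ∑ β ∈ R, (κ α * κ β) * ((⟪α, ζ⟫ / ⟪α, x⟫ : ℝ) : ℂ) *
        ( ((⟪β, θ⟫ / ⟪β, x⟫ : ℝ) : ℂ) * (f x - f (reflect β x))
          - ((⟪β, θ⟫ / ⟪β, reflect α x⟫ : ℝ) : ℂ) *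
              (f (reflect α x) - f (reflect β (reflect α x))) )
        = (κ α * ((⟪α, ζ⟫ / ⟪α, x⟫ : ℝ) : ℂ)) *
            ((∑ β ∈ R, κ β * ((⟪β, θ⟫ / ⟪β, x⟫ : ℝ) : ℂ) * (f x - f (reflect β x)))
              - ∑ β ∈ R, κ β * ((⟪β, θ⟫ / ⟪β, reflect α x⟫ : ℝ) : ℂ) *
                  (f (reflect α x) - f (reflect β (reflect α x)))) := by
      intro α
      rw [mul_sub, Finset.mul_sum, Finset.mul_sum, ← Finset.sum_sub_distrib]
      exact Finset.sum_congr rfl fun β _ => by ring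
    have hper : ∀ α ∈ R, κ α * ((⟪α, ζ⟫ / ⟪α, x⟫ : ℝ) : ℂ) *
        ((fderiv ℝ f x θ + (1 / 2) * ∑ β ∈ R, κ β * ((⟪β, θ⟫ / ⟪β, x⟫ : ℝ) : ℂ) *
            (f x - f (reflect β x)))
          - (fderiv ℝ f (reflect α x) θ + (1 / 2) *
              ∑ β ∈ R, κ β * ((⟪β, θ⟫ / ⟪β, reflect α x⟫ : ℝ) : ℂ) *
                (f (reflect α x) - f (reflect β (reflect α x)))))
        = κ α * ((⟪α, ζ⟫ / ⟪α, x⟫ : ℝ) : ℂ) * (fderiv ℝ f x θ - fderiv ℝ f (reflect α x) θ)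
          + (1 / 2) * ∑ β ∈ R, (κ α * κ β) * ((⟪α, ζ⟫ / ⟪α, x⟫ : ℝ) : ℂ) *
              ( ((⟪β, θ⟫ / ⟪β, x⟫ : ℝ) : ℂ) * (f x - f (reflect β x))
                - ((⟪β, θ⟫ / ⟪β, reflect α x⟫ : ℝ) : ℂ) *
                    (f (reflect α x) - f (reflect β (reflect α x))) ) := by
      intro α _
      rw [hinner α]
      ring
    rw [Finset.sum_congr rfl hper, Finset.sum_add_distrib, ← Finset.mul_sum]
    ring
  rw [shape ξ η, shape η ξ]
  rw [hsymm, D_symm hR hκ hx f ξ η]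
  -- remaining: the single sums are symmetric in ξ and η
  have hsingle :
      (1 / 2 : ℂ) * (∑ β ∈ R, κ β *
          ( ((-(⟪β, η⟫ * ⟪β, ξ⟫) / ⟪β, x⟫ ^ 2 : ℝ) : ℂ) * (f x - f (reflect β x))
            + ((⟪β, η⟫ / ⟪β, x⟫ : ℝ) : ℂ) *
                (fderiv ℝ f x ξ - fderiv ℝ f (reflect β x) (reflect β ξ)) ))
        + (1 / 2 : ℂ) * ∑ α ∈ R, κ α * ((⟪α, ξ⟫ / ⟪α, x⟫ : ℝ) : ℂ) *
            (fderiv ℝ f x η - fderiv ℝ f (reflect α x) η)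
      = (1 / 2 : ℂ) * (∑ β ∈ R, κ β *
          ( ((-(⟪β, ξ⟫ * ⟪β, η⟫) / ⟪β, x⟫ ^ 2 : ℝ) : ℂ) * (f x - f (reflect β x))
            + ((⟪β, ξ⟫ / ⟪β, x⟫ : ℝ) : ℂ) *
                (fderiv ℝ f x η - fderiv ℝ f (reflect β x) (reflect β η)) ))
        + (1 / 2 : ℂ) * ∑ α ∈ R, κ α * ((⟪α, η⟫ / ⟪α, x⟫ : ℝ) : ℂ) *
            (fderiv ℝ f x ξ - fderiv ℝ f (reflect α x) ξ) := by
    rw [Finset.mul_sum, Finset.mul_sum, Finset.mul_sum, Finset.mul_sum,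
      ← Finset.sum_add_distrib, ← Finset.sum_add_distrib]
    refine Finset.sum_congr rfl fun β hβ => ?_
    have hβn : ‖β‖ ^ 2 = 2 := hR.norm_sq _ hβ
    have hpβ : ⟪β, x⟫ ≠ 0 := hx _ hβ
    have hexp : ∀ ζ : E, fderiv ℝ f (reflect β x) (reflect β ζ)
        = fderiv ℝ f (reflect β x) ζ - ((⟪β, ζ⟫ : ℝ) : ℂ) * fderiv ℝ f (reflect β x) β := by
      intro ζ
      rw [reflect_eq_sub hβn ζ, map_sub, map_smul, Complex.real_smul]
    rw [hexp ξ, hexp η]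
    have hpβC : ((⟪β, x⟫ : ℝ) : ℂ) ≠ 0 := by exact_mod_cast hpβ
    push_cast
    field_simp
    ring
  rw [← add_assoc, ← add_assoc, add_assoc ((fderiv ℝ (fderiv ℝ f) x η) ξ), hsingle]
  ring

/-- Dunkl operators commute: for a smooth function `f` and every point `x` of
`P = E ∖ ⋃_{α ∈ R} H_α`, we have `T_{ξ,κ} T_{η,κ} f (x) = T_{η,κ} T_{ξ,κ} f (x)`. -/
theorem dunkl_comm [FiniteDimensional ℝ E]
    (R Rp : Finset E) (hR : IsRootSystem R) (hRp : IsPositiveSystem R Rp)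
    (κ : E → ℂ)
    (hκ : ∀ u ∈ coxeterGroup R, ∀ α ∈ R, κ (u α) = κ α)
    (ξ η : E) (f : E → ℂ) (hf : ContDiff ℝ (⊤ : ℕ∞) f)
    (x : E) (hx : ∀ α ∈ R, (inner ℝ α x : ℝ) ≠ 0) :
    dunkl Rp κ ξ (fun y => dunkl Rp κ η f y) x
      = dunkl Rp κ η (fun y => dunkl Rp κ ξ f y) x := by
  have hκneg : ∀ α ∈ R, κ (-α) = κ α := fun α hα => hR.kappa_neg hκ hα
  have hfun : ∀ ζ : E, (fun y => dunkl Rp κ ζ f y) = (fun y => dunklR R κ ζ f y) :=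
    fun ζ => funext fun y => dunkl_eq_dunklR hRp hκneg ζ f y
  rw [hfun η, hfun ξ, dunkl_eq_dunklR hRp hκneg ξ _ x, dunkl_eq_dunklR hRp hκneg η _ x]
  exact dunklR_comm hR hκ hf hx ξ η
end
end

section
/- Let m ≥ 2 be an integer and θ a real number with sin θ ≠ 0 and m·θ ≡ π (mod 2π), so that multiplication by e^{iθ} is a planar rotation ϱ satisfying ϱ^m = −I. Identify the Euclidean plane with ℂ equipped with the real inner product ⟨z,w⟩ = Re(z·conj(w)). Let v ∈ ℂ with |v| = 1, and let x ∈ ℂ be such that ⟨x, v·e^{ikθ}⟩ ≠ 0 for k = 0, 1, …, m−1. Then Σ_{k=0}^{m−2} 1/(⟨x, v·e^{ikθ}⟩·⟨x, v·e^{i(k+1)θ}⟩) = 1/(⟨x, v·e^{i(m−1)θ}⟩·⟨x, v⟩). -/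
noncomputable section

/-- The real inner product on the plane `ℂ`: `⟨z,w⟩ = Re(z · conj w)`. -/
def rinner (z w : ℂ) : ℝ := (z * (starRingEnd ℂ) w).re

lemma tan_sub_div' (A B : ℝ) (hA : Real.cos A ≠ 0) (hB : Real.cos B ≠ 0) :
    Real.tan A - Real.tan B = Real.sin (A - B) / (Real.cos A * Real.cos B) := by
  rw [Real.tan_eq_sin_div_cos, Real.tan_eq_sin_div_cos, Real.sin_sub]
  field_simp

lemma rinner_eq' (x v : ℂ) (t : ℝ) :
    rinner x (v * Complex.exp (Complex.I * (t : ℂ)))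
      = ‖x * (starRingEnd ℂ) v‖ *
        Real.cos (Complex.arg (x * (starRingEnd ℂ) v) - t) := by
  set w := x * (starRingEnd ℂ) v with hw
  have key : x * (starRingEnd ℂ) (v * Complex.exp (Complex.I * (t : ℂ)))
      = ((‖w‖ : ℝ) : ℂ) *
        Complex.exp (((Complex.arg w - t : ℝ) : ℂ) * Complex.I) := by
    have habs : (‖w‖ : ℂ) * Complex.exp (Complex.arg w * Complex.I) = w :=
      Complex.norm_mul_exp_arg_mul_I w
    rw [map_mul, ← Complex.exp_conj]
    have hc : (starRingEnd ℂ) (Complex.I * (t : ℂ)) = -((t : ℂ) * Complex.I) := by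
      simp [Complex.conj_I]; ring
    rw [hc]
    have h2 : ((‖w‖ : ℝ) : ℂ) * Complex.exp (((Complex.arg w - t : ℝ) : ℂ) * Complex.I)
        = w * Complex.exp (-((t : ℂ) * Complex.I)) := by
      conv_rhs => rw [← habs]
      push_cast
      rw [sub_mul, Complex.exp_sub, div_eq_mul_inv, ← Complex.exp_neg]
      ring
    rw [h2, hw]
    ring
  unfold rinner
  rw [key, Complex.re_ofReal_mul, Complex.exp_ofReal_mul_I_re]

/-- Planar identity: if `ϱ` is the rotation by `θ` with `ϱ^m = −I` (i.e. `mθ ≡ π (mod 2π)`)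
and `sin θ ≠ 0`, `v` a unit vector, and `x` not orthogonal to any of `v, vϱ, …, vϱ^{m−1}`, then
`Σ_{k=0}^{m−2} 1/(⟨x, vϱ^k⟩⟨x, vϱ^{k+1}⟩) = 1/(⟨x, vϱ^{m−1}⟩⟨x, v⟩)`. -/
theorem planar_rotation_sum (m : ℕ) (hm : 2 ≤ m) (θ : ℝ) (hθ : Real.sin θ ≠ 0)
    (hmθ : ∃ j : ℤ, (m : ℝ) * θ = Real.pi + 2 * Real.pi * j)
    (v : ℂ) (hv : ‖v‖ = 1) (x : ℂ)
    (hx : ∀ k < m, rinner x (v * Complex.exp (Complex.I * ((k : ℂ) * (θ : ℂ)))) ≠ 0) :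
    ∑ k ∈ Finset.range (m - 1),
        (rinner x (v * Complex.exp (Complex.I * ((k : ℂ) * (θ : ℂ)))) *
          rinner x (v * Complex.exp (Complex.I * (((k : ℂ) + 1) * (θ : ℂ)))))⁻¹
      = (rinner x (v * Complex.exp (Complex.I * ((((m : ℕ) - 1 : ℕ) : ℂ) * (θ : ℂ)))) *
          rinner x v)⁻¹ := by
  obtain ⟨j, hj⟩ := hmθ
  set w := x * (starRingEnd ℂ) v with hw
  set r := ‖w‖ with hr
  set φ := Complex.arg w with hφ
  -- rewrite the inner products
  have hre : ∀ c : ℝ, rinner x (v * Complex.exp (Complex.I * ((c : ℝ) : ℂ)))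
      = r * Real.cos (φ - c) := fun c => rinner_eq' x v c
  have hreN : ∀ k : ℕ, rinner x (v * Complex.exp (Complex.I * ((k : ℂ) * (θ : ℂ))))
      = r * Real.cos (φ - k * θ) := by
    intro k
    have : ((k : ℂ) * (θ : ℂ)) = (((k : ℝ) * θ : ℝ) : ℂ) := by push_cast; ring
    rw [this, hre]
  have hreN1 : ∀ k : ℕ, rinner x (v * Complex.exp (Complex.I * (((k : ℂ) + 1) * (θ : ℂ))))
      = r * Real.cos (φ - (k + 1) * θ) := by
    intro k
    have : (((k : ℂ) + 1) * (θ : ℂ)) = ((((k : ℝ) + 1) * θ : ℝ) : ℂ) := by push_cast; ring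
    rw [this, hre]
  have hrev : rinner x v = r * Real.cos φ := by
    have h := hre 0
    simpa using h
  -- nonvanishing
  have hr0 : r ≠ 0 := by
    intro h
    have h0 := hx 0 (by omega)
    rw [hreN 0] at h0
    apply h0; rw [h]; ring
  have hcos : ∀ k : ℕ, k < m → Real.cos (φ - k * θ) ≠ 0 := by
    intro k hk
    have h0 := hx k hk
    rw [hreN k] at h0
    intro h; exact h0 (by rw [h]; ring)
  have hcos0 : Real.cos φ ≠ 0 := by
    have := hcos 0 (by omega); simpa using this
  -- telescoping
  have hterm : ∀ k ∈ Finset.range (m - 1),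
      (rinner x (v * Complex.exp (Complex.I * ((k : ℂ) * (θ : ℂ)))) *
          rinner x (v * Complex.exp (Complex.I * (((k : ℂ) + 1) * (θ : ℂ)))))⁻¹
      = Real.tan (φ - k * θ) / (r ^ 2 * Real.sin θ)
        - Real.tan (φ - (k + 1 : ℕ) * θ) / (r ^ 2 * Real.sin θ) := by
    intro k hk
    rw [Finset.mem_range] at hk
    have hk1 : k < m := by omega
    have hk2 : k + 1 < m := by omega
    have hA := hcos k hk1
    have hB := hcos (k + 1) hk2
    rw [hreN k, hreN1 k, div_sub_div_same]
    push_cast at hB ⊢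
    rw [tan_sub_div' _ _ hA hB]
    have hAB : φ - k * θ - (φ - (k + 1) * θ) = θ := by ring
    rw [hAB]
    field_simp
  rw [Finset.sum_congr rfl hterm, Finset.sum_range_sub']
  -- final evaluation
  have hm1 : m - 1 < m := by omega
  have hBm := hcos (m - 1) hm1
  rw [hreN (m - 1), hrev]
  have hzero : ((0 : ℕ) : ℝ) * θ = 0 := by norm_num
  rw [show φ - (0 : ℕ) * θ = φ by push_cast; ring]
  rw [div_sub_div_same, tan_sub_div' _ _ hcos0 hBm]
  have hsin : Real.sin (φ - (φ - ((m - 1 : ℕ) : ℝ) * θ)) = Real.sin θ := by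
    have hcast : ((m - 1 : ℕ) : ℝ) = (m : ℝ) - 1 := by
      have : (1 : ℕ) ≤ m := by omega
      push_cast [this]; ring
    have : φ - (φ - ((m - 1 : ℕ) : ℝ) * θ) = (Real.pi - θ) + j * (2 * Real.pi) := by
      rw [hcast]; nlinarith [hj]
    rw [this, Real.sin_add_int_mul_two_pi, Real.sin_pi_sub]
  rw [hsin]
  have hcast : ((m - 1 : ℕ) : ℝ) = (m : ℝ) - 1 := by
    have h1 : (1 : ℕ) ≤ m := by omega
    push_cast [h1]; ring
  rw [hcast] at hBm
  field_simp
end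
end

section
/- Let E be a real inner product space, let v ∈ E be nonzero, let k ≥ 1 be an integer, let v_0 = v, v_1, …, v_k be vectors in E and c_1 = 1, c_2, …, c_k be real numbers such that v = c_{j+1}·v_j − c_j·v_{j+1} for every 1 ≤ j ≤ k−1. Then for every x ∈ E such that ⟨x,v⟩ ≠ 0 and ⟨x,v_j⟩ ≠ 0 for all 1 ≤ j ≤ k, Σ_{j=1}^{k} 1/(⟨x, v_{j−1}⟩·⟨x, v_j⟩) = c_k/(⟨x, v⟩·⟨x, v_k⟩). -/
/-- Recursive summation identity: if `v₀ = v, v₁, …, v_k` and `c₁ = 1, c₂, …, c_k` satisfy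
`v = c_{j+1} v_j − c_j v_{j+1}` for `1 ≤ j ≤ k−1`, then
`Σ_{j=1}^{k} 1/(⟨x,v_{j−1}⟩⟨x,v_j⟩) = c_k/(⟨x,v⟩⟨x,v_k⟩)`. -/
theorem recursive_inner_sum {E : Type*} [NormedAddCommGroup E] [InnerProductSpace ℝ E]
    (v : E) (hv : v ≠ 0) (k : ℕ) (hk : 1 ≤ k)
    (w : ℕ → E) (hw0 : w 0 = v) (c : ℕ → ℝ) (hc1 : c 1 = 1)
    (hrec : ∀ j : ℕ, 1 ≤ j → j ≤ k - 1 → v = c (j + 1) • w j - c j • w (j + 1))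
    (x : E) (hxv : (inner ℝ x v : ℝ) ≠ 0)
    (hxw : ∀ j : ℕ, 1 ≤ j → j ≤ k → (inner ℝ x (w j) : ℝ) ≠ 0) :
    ∑ j ∈ Finset.range k, ((inner ℝ x (w j) : ℝ) * (inner ℝ x (w (j + 1)) : ℝ))⁻¹
      = c k / ((inner ℝ x v : ℝ) * (inner ℝ x (w k) : ℝ)) := by
  induction k with
  | zero => omega
  | succ n ih =>
    rcases Nat.eq_or_lt_of_le hk with h1 | h1
    · -- n + 1 = 1, i.e. n = 0
      have hn : n = 0 := by omega
      subst hn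
      rw [Finset.sum_range_one, hw0, hc1, div_eq_mul_inv, one_mul]
    · -- n ≥ 1
      have hn : 1 ≤ n := by omega
      have hrec' : ∀ j : ℕ, 1 ≤ j → j ≤ n - 1 → v = c (j + 1) • w j - c j • w (j + 1) :=
        fun j hj hj' => hrec j hj (by omega)
      have hxw' : ∀ j : ℕ, 1 ≤ j → j ≤ n → (inner ℝ x (w j) : ℝ) ≠ 0 :=
        fun j hj hj' => hxw j hj (by omega)
      have IH := ih hn hrec' hxw'
      rw [Finset.sum_range_succ, IH]
      have hv' : (inner ℝ x v : ℝ) = c (n + 1) * inner ℝ x (w n) - c n * inner ℝ x (w (n + 1)) := by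
        have := hrec n hn (by omega)
        rw [this]
        simp [inner_sub_right, inner_smul_right]
      have hA := hxv
      have hB := hxw n hn (by omega)
      have hC := hxw (n + 1) (by omega) le_rfl
      field_simp
      linear_combination hv'
end

section
/- Let E be a real inner product space, let v ∈ E, let k ≥ 0 be an integer, and let v_0 = v, v_1, …, v_{k+1} be vectors in E such that v_j = v + v_{j+1} for every 1 ≤ j ≤ k (a sequence of arithmetic type). Then for every x ∈ E such that ⟨x, v⟩ ≠ 0 and ⟨x, v_j⟩ ≠ 0 for all 0 ≤ j ≤ k+1, Σ_{j=0}^{k} coth(⟨x, v_j⟩)·coth(⟨x, v_{j+1}⟩) = coth(⟨x, v⟩)·coth(⟨x, v_{k+1}⟩) + k. -/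
noncomputable section

/-- The hyperbolic cotangent `coth t = cosh t / sinh t`. -/
def coth (t : ℝ) : ℝ := Real.cosh t / Real.sinh t

lemma coth_key (a b : ℝ) (ha : a ≠ 0) (hb : b ≠ 0) (hab : a + b ≠ 0) :
    coth (a + b) * coth b = coth a * coth b - coth a * coth (a + b) + 1 := by
  have hsa : Real.sinh a ≠ 0 := by simpa [Real.sinh_eq_zero] using ha
  have hsb : Real.sinh b ≠ 0 := by simpa [Real.sinh_eq_zero] using hb
  have hsab : Real.sinh (a + b) ≠ 0 := by simpa [Real.sinh_eq_zero] using hab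
  unfold coth
  field_simp
  rw [Real.sinh_add, Real.cosh_add]
  nlinarith [Real.cosh_sq a, Real.cosh_sq b, Real.sinh_sq a, Real.sinh_sq b]

/-- For a sequence `v₀ = v, v₁, …, v_{k+1}` of arithmetic type (`v_j = v + v_{j+1}` for
`1 ≤ j ≤ k`) and `x` with `⟨x,v⟩ ≠ 0` and `⟨x,v_j⟩ ≠ 0` for all `0 ≤ j ≤ k+1`:
`Σ_{j=0}^{k} coth⟨x,v_j⟩·coth⟨x,v_{j+1}⟩ = coth⟨x,v⟩·coth⟨x,v_{k+1}⟩ + k`. -/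
theorem coth_inner_sum_arithmetic {E : Type*} [NormedAddCommGroup E] [InnerProductSpace ℝ E]
    (v : E) (k : ℕ) (w : ℕ → E) (hw0 : w 0 = v)
    (hrec : ∀ j : ℕ, 1 ≤ j → j ≤ k → w j = v + w (j + 1))
    (x : E) (hxv : (inner ℝ x v : ℝ) ≠ 0)
    (hxw : ∀ j : ℕ, j ≤ k + 1 → (inner ℝ x (w j) : ℝ) ≠ 0) :
    ∑ j ∈ Finset.range (k + 1), coth (inner ℝ x (w j) : ℝ) * coth (inner ℝ x (w (j + 1)) : ℝ)
      = coth (inner ℝ x v : ℝ) * coth (inner ℝ x (w (k + 1)) : ℝ) + (k : ℝ) := by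
  induction k with
  | zero => simp [hw0]
  | succ n ih =>
    have IH := ih (fun j h1 h2 => hrec j h1 (h2.trans (Nat.le_succ n)))
      (fun j hj => hxw j (hj.trans (Nat.le_succ (n + 1))))
    rw [Finset.sum_range_succ, IH]
    have hstep : w (n + 1) = v + w (n + 2) := hrec (n + 1) (Nat.le_add_left 1 n) le_rfl
    have hin : (inner ℝ x (w (n + 1)) : ℝ) = (inner ℝ x v : ℝ) + (inner ℝ x (w (n + 2)) : ℝ) := by
      rw [hstep, inner_add_right]
    have h2 : (inner ℝ x (w (n + 2)) : ℝ) ≠ 0 := hxw (n + 2) le_rfl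
    have h1 : (inner ℝ x (w (n + 1)) : ℝ) ≠ 0 := hxw (n + 1) (Nat.le_succ (n + 1))
    have key := coth_key (inner ℝ x v : ℝ) (inner ℝ x (w (n + 2)) : ℝ) hxv h2 (hin ▸ h1)
    rw [hin, key, ← hin]
    push_cast
    ring
end
end

section
/- Let E be a finite-dimensional real inner product space and R a root system in E, with Coxeter group G = G(R). Then for every x ∈ E, the stabilizer of x in G is trivial if and only if x ∈ P := E ∖ ⋃_{α∈R} H_α. Equivalently: the action of G on P is free, and every point lying on some hyperplane H_α has nontrivial stabilizer. -/
noncomputable section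

variable {E : Type*} [NormedAddCommGroup E] [InnerProductSpace ℝ E]

open scoped Classical

set_option linter.unusedVariables false
set_option linter.unusedSectionVars false

namespace RootAux

def rf (α : E) (x : E) : E := x - (inner ℝ α x : ℝ) • α

lemma rf_add (α x y : E) : rf α (x + y) = rf α x + rf α y := by
  simp [rf, inner_add_right, add_smul]; abel

lemma rf_smul (α : E) (c : ℝ) (x : E) : rf α (c • x) = c • rf α x := by
  simp [rf, inner_smul_right, smul_sub, smul_smul]

lemma rf_invol (α : E) (h : ‖α‖ ^ 2 = 2) (x : E) : rf α (rf α x) = x := by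
  have hself : (inner ℝ α α : ℝ) = 2 := by rw [real_inner_self_eq_norm_sq, h]
  simp [rf, inner_sub_right, inner_smul_right, hself, h, sub_smul, smul_smul]
  module

lemma rf_norm (α : E) (h : ‖α‖ ^ 2 = 2) (x : E) : ‖rf α x‖ = ‖x‖ := by
  have h2 : ‖rf α x‖ ^ 2 = ‖x‖ ^ 2 := by
    rw [rf, norm_sub_sq_real]
    have : (inner ℝ x ((inner ℝ α x : ℝ) • α) : ℝ) = (inner ℝ α x : ℝ) * (inner ℝ α x : ℝ) := by
      rw [real_inner_smul_right, real_inner_comm]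
    rw [this]
    rw [norm_smul]
    have : (‖(inner ℝ α x : ℝ)‖ * ‖α‖) ^ 2 = (inner ℝ α x :ℝ)^2 * 2 := by
      rw [mul_pow, h, Real.norm_eq_abs, sq_abs]
    rw [this]; ring
  nlinarith [norm_nonneg (rf α x), norm_nonneg x]

def sig (α : E) : E ≃ₗᵢ[ℝ] E :=
  if h : ‖α‖ ^ 2 = 2 then
    { toFun := rf α
      invFun := rf α
      left_inv := rf_invol α h
      right_inv := rf_invol α h
      map_add' := rf_add α
      map_smul' := rf_smul α
      norm_map' := rf_norm α h }
  else 1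

lemma sig_apply (α : E) (h : ‖α‖ ^ 2 = 2) (x : E) : sig α x = x - (inner ℝ α x : ℝ) • α := by
  simp [sig, h]; rfl

lemma sig_invol (α : E) (x : E) : sig α (sig α x) = x := by
  by_cases h : ‖α‖ ^ 2 = 2
  · rw [sig_apply α h, sig_apply α h, ← rf, ← rf, rf_invol α h]
  · simp [sig, h]

lemma sig_inv (α : E) : (sig α)⁻¹ = sig α := by
  ext x
  have := sig_invol α x
  calc (sig α)⁻¹ x = (sig α)⁻¹ (sig α (sig α x)) := by rw [this]
    _ = sig α x := by simp

lemma sig_mul_self (α : E) : sig α * sig α = 1 := by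
  ext x; exact sig_invol α x

lemma sig_neg (α : E) : sig (-α) = sig α := by
  by_cases h : ‖α‖ ^ 2 = 2
  · have h' : ‖-α‖ ^ 2 = 2 := by rwa [norm_neg]
    ext x
    rw [sig_apply _ h', sig_apply _ h]
    simp [inner_neg_left]
  · have h' : ¬ ‖-α‖ ^ 2 = 2 := by rwa [norm_neg]
    simp [sig, h, h']

lemma sig_self (α : E) (h : ‖α‖ ^ 2 = 2) : sig α α = -α := by
  rw [sig_apply α h]
  have hself : (inner ℝ α α : ℝ) = 2 := by rw [real_inner_self_eq_norm_sq, h]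
  rw [hself]
  module

lemma sig_conj (g : E ≃ₗᵢ[ℝ] E) (α : E) (h : ‖α‖ ^ 2 = 2) :
    sig (g α) = g * sig α * g⁻¹ := by
  have h' : ‖g α‖ ^ 2 = 2 := by rw [g.norm_map]; exact h
  ext y
  show sig (g α) y = g (sig α (g⁻¹ y))
  rw [sig_apply _ h', sig_apply _ h]
  have : (inner ℝ α ((g⁻¹ : E ≃ₗᵢ[ℝ] E) y) : ℝ) = inner ℝ (g α) y := by
    rw [← g.inner_map_map α]
    simp
  rw [map_sub, map_smul, this]
  simp

lemma sig_coe (α : E) (h : ‖α‖ ^ 2 = 2) : ⇑(sig α) = reflect α := by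
  funext y
  rw [sig_apply α h, reflect, h]
  norm_num

lemma sig_mem_root {R : Finset E} (hR : IsRootSystem R) {α β : E} (hα : α ∈ R) (hβ : β ∈ R) :
    sig α β ∈ R := by
  have h2 := hR.norm_sq α hα
  have : reflect α β ∈ reflect α '' (R : Set E) := ⟨β, hβ, rfl⟩
  rw [hR.reflect_eq α hα] at this
  rw [← sig_coe α h2] at this
  exact_mod_cast this

/-- product of reflections along a list -/
def prodSig (l : List E) : E ≃ₗᵢ[ℝ] E := (l.map sig).prod

lemma prodSig_nil : prodSig ([] : List E) = 1 := rfl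

lemma prodSig_cons (a : E) (l : List E) : prodSig (a :: l) = sig a * prodSig l := by
  simp [prodSig]

lemma prodSig_append (l₁ l₂ : List E) : prodSig (l₁ ++ l₂) = prodSig l₁ * prodSig l₂ := by
  simp [prodSig]

lemma prodSig_mem_root {R : Finset E} (hR : IsRootSystem R) {l : List E}
    (hl : ∀ a ∈ l, a ∈ R) {β : E} (hβ : β ∈ R) : prodSig l β ∈ R := by
  induction l with
  | nil => simpa [prodSig_nil] using hβ
  | cons a t ih =>
      rw [prodSig_cons]
      have ht : prodSig t β ∈ R := ih (fun b hb => hl b (List.mem_cons_of_mem a hb))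
      exact sig_mem_root hR (hl a (List.mem_cons_self)) ht

lemma prodSig_inv (l : List E) : (prodSig l)⁻¹ = prodSig l.reverse := by
  induction l with
  | nil => simp [prodSig_nil]
  | cons a t ih =>
      rw [prodSig_cons, mul_inv_rev, ih, sig_inv, List.reverse_cons, prodSig_append]
      simp [prodSig_cons, prodSig_nil]

/-- The positive roots with respect to `x`. -/
def Rpos (R : Finset E) (x : E) : Set E := {α | α ∈ R ∧ 0 < (inner ℝ α x : ℝ)}

/-- `Δ` is a generating subset of the positive roots: every positive root is a nonnegative
combination of elements of `Δ`. -/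
def Gen (R : Finset E) (x : E) (Δ : Finset E) : Prop :=
  (∀ d ∈ Δ, d ∈ Rpos R x) ∧
    ∀ β ∈ Rpos R x, ∃ f : E → ℝ, (∀ d ∈ Δ, 0 ≤ f d) ∧ β = ∑ d ∈ Δ, f d • d

lemma gen_self (R : Finset E) (x : E) :
    Gen R x (R.filter (fun α => 0 < (inner ℝ α x : ℝ))) := by
  constructor
  · intro d hd
    rw [Finset.mem_filter] at hd
    exact ⟨hd.1, hd.2⟩
  · intro β hβ
    refine ⟨fun d => if d = β then 1 else 0, by intro d _; positivity, ?_⟩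
    have hmem : β ∈ R.filter (fun α => 0 < (inner ℝ α x : ℝ)) :=
      Finset.mem_filter.mpr ⟨hβ.1, hβ.2⟩
    rw [Finset.sum_congr rfl (fun d _ => by
      show (if d = β then (1:ℝ) else 0) • d = if d = β then (1:ℝ) • d else 0
      split <;> simp)]
    rw [Finset.sum_ite_eq' _ β (fun d => (1:ℝ) • d), if_pos hmem, one_smul]

/-- the subgroup generated by the simple reflections -/
def Hgrp (Δ : Finset E) : Subgroup (E ≃ₗᵢ[ℝ] E) :=
  Subgroup.closure {g | ∃ δ ∈ Δ, g = sig δ}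

section Main

variable {R : Finset E} (hR : IsRootSystem R) {x : E}
  (hx : ∀ α ∈ R, (inner ℝ α x : ℝ) ≠ 0)
  {Δ : Finset E} (hΔ : Gen R x Δ)
  (hmin : ∀ Δ' : Finset E, Gen R x Δ' → Δ.card ≤ Δ'.card)

include hR hx hΔ hmin in
/-- Key lemma: a "simple" reflection maps every other positive root to a positive root. -/
lemma key' {δ β : E} (hδ : δ ∈ Δ) (hβ : β ∈ Rpos R x) (hne : β ≠ δ) :
    sig δ β ∈ Rpos R x := by
  obtain ⟨hδR, hδx⟩ := hΔ.1 δ hδ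
  have h2 : ‖δ‖ ^ 2 = 2 := hR.norm_sq δ hδR
  have hmemR : sig δ β ∈ R := sig_mem_root hR hδR hβ.1
  rcases (hx _ hmemR).lt_or_gt with hneg | hpos
  swap
  · exact ⟨hmemR, hpos⟩
  exfalso
  set c : ℝ := inner ℝ δ β with hc
  have hsig : sig δ β = β - c • δ := sig_apply δ h2 β
  set γ : E := c • δ - β with hγ
  have hγR : γ ∈ R := by
    have := hR.neg_mem _ hmemR
    rwa [hsig, neg_sub] at this
  have hγx : 0 < (inner ℝ γ x : ℝ) := by
    have : (inner ℝ γ x : ℝ) = -(inner ℝ (sig δ β) x : ℝ) := by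
      rw [hsig, hγ, ← neg_sub, inner_neg_left]
    rw [this]; linarith
  have hγpos : γ ∈ Rpos R x := ⟨hγR, hγx⟩
  have hβγ : β + γ = c • δ := by rw [hγ]; abel
  have hcpos : 0 < c := by
    have h1 : (inner ℝ (β + γ) x : ℝ) = c * inner ℝ δ x := by
      rw [hβγ, real_inner_smul_left]
    rw [inner_add_left] at h1
    have hβx := hβ.2
    nlinarith
  have hγδ : γ ≠ δ := by
    intro hEq
    have hβδ : β = (c - 1) • δ := by
      have h6 : δ + β = c • δ := by
        have h7 := hγ
        rw [hEq] at h7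
        rw [eq_sub_iff_add_eq] at h7
        exact h7
      rw [sub_smul, one_smul, eq_sub_iff_add_eq, add_comm]
      exact h6
    rcases hR.smul_mem δ hδR (c - 1) (hβδ ▸ hβ.1) with h1 | h1
    · exact hne (by rw [hβδ, h1, one_smul])
    · rw [h1] at hβδ
      have hβneg : β = -δ := by rw [hβδ]; module
      have h5 := hβ.2
      rw [hβneg, inner_neg_left] at h5
      linarith
  obtain ⟨f₁, hf₁0, hf₁⟩ := hΔ.2 β hβ
  obtain ⟨f₂, hf₂0, hf₂⟩ := hΔ.2 γ hγpos
  set s : Finset E := Δ.erase δ with hs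
  have hsplit : ∀ f : E → ℝ, ∑ d ∈ Δ, f d • d = f δ • δ + ∑ d ∈ s, f d • d :=
    fun f => (Finset.add_sum_erase Δ (fun d => f d • d) hδ).symm
  set T : ℝ := f₁ δ + f₂ δ with hT
  have hkey : (c - T) • δ = ∑ d ∈ s, (f₁ d + f₂ d) • d := by
    have : β + γ = T • δ + ∑ d ∈ s, (f₁ d + f₂ d) • d := by
      rw [hf₁, hf₂, hsplit f₁, hsplit f₂]
      rw [Finset.sum_congr rfl (fun d _ => (add_smul (f₁ d) (f₂ d) d)), Finset.sum_add_distrib]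
      rw [hT, add_smul]
      abel
    rw [hβγ] at this
    rw [sub_smul]
    rw [this]
    abel
  by_cases hTc : T < c
  -- Case 1: δ is a cone combination of Δ.erase δ; contradict minimality
  · have hcT : 0 < c - T := by linarith
    have hδcone : δ = ∑ d ∈ s, ((c - T)⁻¹ * (f₁ d + f₂ d)) • d := by
      have := congrArg (fun v => (c - T)⁻¹ • v) hkey
      rw [smul_smul, inv_mul_cancel₀ (ne_of_gt hcT), one_smul] at this
      rw [this, Finset.smul_sum]
      exact Finset.sum_congr rfl fun d _ => (smul_smul _ _ d)
    have hGen' : Gen R x s := by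
      constructor
      · exact fun d hd => hΔ.1 d (Finset.mem_of_mem_erase hd)
      · intro β' hβ'
        obtain ⟨f, hf0, hfe⟩ := hΔ.2 β' hβ'
        refine ⟨fun d => f d + f δ * ((c - T)⁻¹ * (f₁ d + f₂ d)), ?_, ?_⟩
        · intro d hd
          have hd' : d ∈ Δ := Finset.mem_of_mem_erase hd
          have := hf₁0 d hd'
          have := hf₂0 d hd'
          have := hf0 d hd'
          have := hf0 δ hδ
          positivity
        · have h4 : f δ • δ = ∑ d ∈ s, (f δ * ((c - T)⁻¹ * (f₁ d + f₂ d))) • d := by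
            calc f δ • δ = f δ • ∑ d ∈ s, ((c - T)⁻¹ * (f₁ d + f₂ d)) • d :=
                  congrArg (f δ • ·) hδcone
              _ = ∑ d ∈ s, (f δ * ((c - T)⁻¹ * (f₁ d + f₂ d))) • d := by
                  rw [Finset.smul_sum]
                  exact Finset.sum_congr rfl fun d _ => smul_smul _ _ d
          rw [hfe, hsplit f, h4, ← Finset.sum_add_distrib]
          exact Finset.sum_congr rfl fun d _ => by
            simp only []
            rw [← add_smul, add_comm (f δ * ((c - T)⁻¹ * (f₁ d + f₂ d)))]
    have hle := hmin s hGen'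
    have hlt := Finset.card_erase_lt_of_mem hδ
    rw [← hs] at hlt
    omega
  -- Case 2: pairing with x forces β = (f₁ δ) • δ, contradiction
  · have hTc' : c - T ≤ 0 := by linarith
    have hpair : (c - T) * (inner ℝ δ x : ℝ) = ∑ d ∈ s, (f₁ d + f₂ d) * (inner ℝ d x : ℝ) := by
      have := congrArg (fun v => (inner ℝ v x : ℝ)) hkey
      simpa only [real_inner_smul_left, sum_inner] using this
    have hterm0 : ∀ d ∈ s, 0 ≤ (f₁ d + f₂ d) * (inner ℝ d x : ℝ) := by
      intro d hd
      have hd' : d ∈ Δ := Finset.mem_of_mem_erase hd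
      have h1 := hf₁0 d hd'
      have h2 := hf₂0 d hd'
      have h3 := (hΔ.1 d hd').2
      positivity
    have hsum0 : ∑ d ∈ s, (f₁ d + f₂ d) * (inner ℝ d x : ℝ) = 0 := by
      have hle : (c - T) * (inner ℝ δ x : ℝ) ≤ 0 :=
        mul_nonpos_of_nonpos_of_nonneg hTc' (le_of_lt hδx)
      have hge : 0 ≤ ∑ d ∈ s, (f₁ d + f₂ d) * (inner ℝ d x : ℝ) :=
        Finset.sum_nonneg hterm0
      linarith [hpair]
    have hzero : ∀ d ∈ s, f₁ d = 0 := by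
      intro d hd
      have := (Finset.sum_eq_zero_iff_of_nonneg hterm0).mp hsum0 d hd
      have hd' : d ∈ Δ := Finset.mem_of_mem_erase hd
      have h1 := hf₁0 d hd'
      have h2 := hf₂0 d hd'
      have h3 := (hΔ.1 d hd').2
      rcases mul_eq_zero.mp this with h | h
      · linarith
      · linarith
    have hβδ : β = f₁ δ • δ := by
      rw [hf₁, hsplit f₁, Finset.sum_eq_zero (fun d hd => by rw [hzero d hd, zero_smul]),
        add_zero]
    rcases hR.smul_mem δ hδR (f₁ δ) (hβδ ▸ hβ.1) with h1 | h1
    · exact hne (by rw [hβδ, h1, one_smul])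
    · have := hf₁0 δ hδ
      rw [h1] at this
      linarith

include hR hx hΔ hmin in
lemma sig_mem_H : ∀ (n : ℕ) (α : E), α ∈ Rpos R x →
    (R.filter (fun β => 0 < (inner ℝ β x : ℝ) ∧ (inner ℝ β x : ℝ) < (inner ℝ α x : ℝ))).card = n →
    sig α ∈ Hgrp Δ := by
  intro n
  induction n using Nat.strong_induction_on with
  | _ n ih =>
    intro α hα hcard
    obtain ⟨hαR, hαx⟩ := hα
    obtain ⟨f, hf0, hfe⟩ := hΔ.2 α ⟨hαR, hαx⟩
    have hαα : (inner ℝ α α : ℝ) = 2 := by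
      rw [real_inner_self_eq_norm_sq, hR.norm_sq α hαR]
    have hsum : ∑ d ∈ Δ, f d * (inner ℝ d α : ℝ) = 2 := by
      rw [← hαα]
      nth_rewrite 2 [hfe]
      rw [sum_inner]
      exact Finset.sum_congr rfl fun d _ => (real_inner_smul_left d α (f d)).symm
    have hex : ∃ d ∈ Δ, 0 < f d * (inner ℝ d α : ℝ) := by
      by_contra hcon
      push_neg at hcon
      have := Finset.sum_nonpos hcon
      rw [hsum] at this
      linarith
    obtain ⟨d, hdΔ, hfd⟩ := hex
    have hdα : 0 < (inner ℝ d α : ℝ) := by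
      rcases lt_or_ge 0 (inner ℝ d α : ℝ) with h | h
      · exact h
      · nlinarith [hf0 d hdΔ]
    by_cases heq : α = d
    · exact Subgroup.subset_closure ⟨d, hdΔ, by rw [heq]⟩
    · have hβ : sig d α ∈ Rpos R x := key' hR hx hΔ hmin hdΔ ⟨hαR, hαx⟩ heq
      set β := sig d α with hβdef
      have hd2 : ‖d‖ ^ 2 = 2 := hR.norm_sq d (hΔ.1 d hdΔ).1
      have hβeq : β = α - (inner ℝ d α : ℝ) • d := sig_apply d hd2 α
      have hdx : 0 < (inner ℝ d x : ℝ) := (hΔ.1 d hdΔ).2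
      have hβx : (inner ℝ β x : ℝ) < (inner ℝ α x : ℝ) := by
        rw [hβeq, inner_sub_left, real_inner_smul_left]
        nlinarith
      -- measure decreases
      have hss : (R.filter (fun β' => 0 < (inner ℝ β' x : ℝ) ∧ (inner ℝ β' x : ℝ) < (inner ℝ β x : ℝ)))
          ⊂ (R.filter (fun β' => 0 < (inner ℝ β' x : ℝ) ∧ (inner ℝ β' x : ℝ) < (inner ℝ α x : ℝ))) := by
        constructor
        · intro b hb
          rw [Finset.mem_filter] at hb ⊢
          exact ⟨hb.1, hb.2.1, lt_trans hb.2.2 hβx⟩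
        · intro hsub
          have hβmem : β ∈ (R.filter (fun β' => 0 < (inner ℝ β' x : ℝ) ∧ (inner ℝ β' x : ℝ) < (inner ℝ α x : ℝ))) :=
            Finset.mem_filter.mpr ⟨hβ.1, hβ.2, hβx⟩
          have := hsub hβmem
          rw [Finset.mem_filter] at this
          exact lt_irrefl _ this.2.2
      have hcard' := Finset.card_lt_card hss
      rw [hcard] at hcard'
      have hβH : sig β ∈ Hgrp Δ := ih _ hcard' β hβ rfl
      have hαβ : α = sig d β := (sig_invol d α).symm
      have : sig α = sig d * sig β * (sig d)⁻¹ := by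
        rw [hαβ]
        exact sig_conj (sig d) β (by rw [hR.norm_sq β hβ.1])
      rw [this]
      have hdH : sig d ∈ Hgrp Δ := Subgroup.subset_closure ⟨d, hdΔ, rfl⟩
      exact Subgroup.mul_mem _ (Subgroup.mul_mem _ hdH hβH) (Subgroup.inv_mem _ hdH)

include hR hx hΔ hmin in
lemma coxeter_le_H : coxeterGroup R ≤ Hgrp Δ := by
  rw [coxeterGroup]
  apply Subgroup.closure_le (Hgrp Δ) |>.mpr
  rintro g ⟨α, hαR, hgα⟩
  have h2 : ‖α‖ ^ 2 = 2 := hR.norm_sq α hαR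
  have hgsig : g = sig α := by
    have hcoe : ⇑g = ⇑(sig α) := by rw [hgα, sig_coe α h2]
    exact DFunLike.coe_injective hcoe
  rcases (hx α hαR).lt_or_gt with hneg | hpos
  · have hnegR : -α ∈ R := hR.neg_mem α hαR
    have : (-α) ∈ Rpos R x := ⟨hnegR, by rw [inner_neg_left]; linarith⟩
    have := sig_mem_H hR hx hΔ hmin _ (-α) this rfl
    rw [sig_neg] at this
    rwa [hgsig]
  · have : α ∈ Rpos R x := ⟨hαR, hpos⟩
    have := sig_mem_H hR hx hΔ hmin _ α this rfl
    rwa [hgsig]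

omit hR hx hmin in
include hΔ in
lemma exists_list {g : E ≃ₗᵢ[ℝ] E} (hg : g ∈ Hgrp Δ) :
    ∃ l : List E, (∀ a ∈ l, a ∈ Δ) ∧ g = prodSig l := by
  induction hg using Subgroup.closure_induction with
  | mem g hgmem =>
      obtain ⟨δ, hδ, rfl⟩ := hgmem
      exact ⟨[δ], by simp [hδ], by simp [prodSig_cons, prodSig_nil]⟩
  | one => exact ⟨[], by simp, by simp [prodSig_nil]⟩
  | mul g₁ g₂ h₁ h₂ ih₁ ih₂ =>
      obtain ⟨l₁, hm₁, he₁⟩ := ih₁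
      obtain ⟨l₂, hm₂, he₂⟩ := ih₂
      refine ⟨l₁ ++ l₂, ?_, by rw [prodSig_append, he₁, he₂]⟩
      intro a ha
      rcases List.mem_append.mp ha with h | h
      · exact hm₁ a h
      · exact hm₂ a h
  | inv g h ih =>
      obtain ⟨l, hm, he⟩ := ih
      refine ⟨l.reverse, ?_, by rw [he, prodSig_inv]⟩
      intro a ha
      exact hm a (List.mem_reverse.mp ha)

include hR hx hΔ hmin in
lemma deletion : ∀ (l : List E), (∀ a ∈ l, a ∈ Δ) → ∀ δ, δ ∈ Δ →
    (inner ℝ (prodSig l δ) x : ℝ) < 0 →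
    ∃ l', (∀ a ∈ l', a ∈ Δ) ∧ l'.length + 1 ≤ l.length ∧ prodSig l * sig δ = prodSig l' := by
  intro l
  induction l with
  | nil =>
      intro _ δ hδ hlt
      rw [prodSig_nil] at hlt
      have := (hΔ.1 δ hδ).2
      change (inner ℝ ((1 : E ≃ₗᵢ[ℝ] E) δ) x : ℝ) < 0 at hlt
      simp only [LinearIsometryEquiv.coe_one, id_eq] at hlt
      linarith
  | cons a t ih =>
      intro hmem δ hδ hlt
      have hat : ∀ b ∈ t, b ∈ Δ := fun b hb => hmem b (List.mem_cons_of_mem a hb)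
      have haΔ : a ∈ Δ := hmem a (List.mem_cons_self)
      have hδR : δ ∈ R := (hΔ.1 δ hδ).1
      have hβR : prodSig t δ ∈ R :=
        prodSig_mem_root hR (fun b hb => (hΔ.1 b (hat b hb)).1) hδR
      rw [prodSig_cons] at hlt
      rcases (hx _ hβR).lt_or_gt with hneg | hpos
      · obtain ⟨l', hm', hlen', heq'⟩ := ih hat δ hδ hneg
        refine ⟨a :: l', ?_, by simpa using Nat.succ_le_succ hlen', ?_⟩
        · intro b hb
          rcases List.mem_cons.mp hb with h | h
          · rw [h]; exact haΔ
          · exact hm' b h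
        · rw [prodSig_cons, mul_assoc, heq', prodSig_cons]
      · -- prodSig t δ is a positive root sent negative by sig a, hence equals a
        have hβpos : prodSig t δ ∈ Rpos R x := ⟨hβR, hpos⟩
        have hβa : prodSig t δ = a := by
          by_contra hne
          have := key' hR hx hΔ hmin haΔ hβpos hne
          have h2 := this.2
          change (inner ℝ (sig a ((prodSig t) δ)) x : ℝ) < 0 at hlt
          linarith
        have hconj : sig a = prodSig t * sig δ * (prodSig t)⁻¹ := by
          rw [← hβa]
          exact sig_conj (prodSig t) δ (hR.norm_sq δ hδR)
        refine ⟨t, hat, by simp, ?_⟩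
        rw [prodSig_cons, hconj]
        calc prodSig t * sig δ * (prodSig t)⁻¹ * prodSig t * sig δ
            = prodSig t * (sig δ * sig δ) := by group
          _ = prodSig t := by rw [sig_mul_self, mul_one]

include hR hx hΔ hmin in
lemma stab_trivial {g : E ≃ₗᵢ[ℝ] E} (hg : g ∈ coxeterGroup R) (hgx : g x = x) : g = 1 := by
  have hgH : g ∈ Hgrp Δ := coxeter_le_H hR hx hΔ hmin hg
  have hP : ∃ n : ℕ, ∃ l : List E, (∀ a ∈ l, a ∈ Δ) ∧ g = prodSig l ∧ l.length = n := by
    obtain ⟨l, hm, he⟩ := exists_list hΔ hgH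
    exact ⟨l.length, l, hm, he, rfl⟩
  obtain ⟨l, hlΔ, hlg, hlen⟩ := Nat.find_spec hP
  rcases List.eq_nil_or_concat l with rfl | ⟨l', δ, rfl⟩
  · rw [hlg, prodSig_nil]
  · have hδΔ : δ ∈ Δ := hlΔ δ (by simp)
    have hl'Δ : ∀ a ∈ l', a ∈ Δ := fun a ha => hlΔ a (by simp [ha])
    have hδpos : δ ∈ Rpos R x := hΔ.1 δ hδΔ
    have hδ2 : ‖δ‖ ^ 2 = 2 := hR.norm_sq δ hδpos.1
    have hsplit : g = prodSig l' * sig δ := by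
      rw [hlg, List.concat_eq_append, prodSig_append, prodSig_cons, prodSig_nil, mul_one]
    have hwδR : prodSig l' δ ∈ R :=
      prodSig_mem_root hR (fun a ha => (hΔ.1 a (hl'Δ a ha)).1) hδpos.1
    exfalso
    rcases (hx _ hwδR).lt_or_gt with hneg | hpos
    · obtain ⟨l₂, hm₂, hlen₂, heq₂⟩ := deletion hR hx hΔ hmin l' hl'Δ δ hδΔ hneg
      have hglval : g = prodSig l₂ := by rw [hsplit, heq₂]
      have hlt : l₂.length < Nat.find hP := by
        have hlen' : l'.length + 1 = Nat.find hP := by simpa using hlen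
        omega
      exact Nat.find_min hP hlt ⟨l₂, hm₂, hglval, rfl⟩
    · have hgδ : g δ = -(prodSig l' δ) := by
        rw [hsplit]
        show prodSig l' (sig δ δ) = -(prodSig l' δ)
        rw [sig_self δ hδ2, map_neg]
      have h1 : (inner ℝ (g δ) x : ℝ) < 0 := by
        rw [hgδ, inner_neg_left]; linarith
      have h2 : (inner ℝ (g δ) x : ℝ) = inner ℝ δ x := by
        conv_lhs => rw [← hgx]
        exact g.inner_map_map δ x
      have := hδpos.2
      rw [h2] at h1
      linarith

end Main

end RootAux

/-- A point of `E` has trivial stabilizer in the Coxeter group `G(R)` if and only if it lies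
in `P = E ∖ ⋃_{α∈R} H_α`, i.e. it is not orthogonal to any root. -/
theorem stabilizer_trivial_iff_mem_P [FiniteDimensional ℝ E]
    (R : Finset E) (hR : IsRootSystem R) (x : E) :
    (∀ g ∈ coxeterGroup R, g x = x → g = 1) ↔ ∀ α ∈ R, (inner ℝ α x : ℝ) ≠ 0 := by
  constructor
  · intro h α hα hinner
    have h2 := hR.norm_sq α hα
    have hmem : RootAux.sig α ∈ coxeterGroup R :=
      Subgroup.subset_closure ⟨α, hα, RootAux.sig_coe α h2⟩
    have hfix : RootAux.sig α x = x := by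
      rw [RootAux.sig_apply α h2, hinner, zero_smul, sub_zero]
    have h1 := h _ hmem hfix
    have hαα := congrArg (fun g : E ≃ₗᵢ[ℝ] E => g α) h1
    simp only [LinearIsometryEquiv.coe_one, id_eq] at hαα
    rw [RootAux.sig_self α h2] at hαα
    apply hR.nonzero α hα
    have : α + α = 0 := by nth_rewrite 1 [← hαα]; exact neg_add_cancel α
    have h20 : (2 : ℝ) • α = 0 := by rw [two_smul]; exact this
    have := smul_eq_zero.mp h20
    rcases this with h | h
    · norm_num at h
    · exact h
  · intro hx g hg hgx
    have hexΔ : ∃ n : ℕ, ∃ Δ : Finset E, RootAux.Gen R x Δ ∧ Δ.card = n :=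
      ⟨_, _, RootAux.gen_self R x, rfl⟩
    obtain ⟨Δ, hΔ, hΔcard⟩ := Nat.find_spec hexΔ
    have hmin : ∀ Δ' : Finset E, RootAux.Gen R x Δ' → Δ.card ≤ Δ'.card := by
      intro Δ' hΔ'
      rw [hΔcard]
      exact Nat.find_min' hexΔ ⟨Δ', hΔ', rfl⟩
    exact RootAux.stab_trivial hR hx hΔ hmin hg hgx
end
end
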